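/- arXiv:2401.14929 — 9 statements merged into one kernel-verified Lean document; each statement's English description precedes it below -/
import Mathlib

section
/- Let G be a compact topological group with Haar probability measure μ, and let V be a real Banach space on which G acts continuously by linear isometries, written (s, v) ↦ s • v (jointly continuous, each s • (−) a linear isometry). For a continuous map β : G × G → V define its coboundary δβ : G × G × G → V by δβ(s,t,u) := s • β(t,u) − β(st, u) + β(s, tu) − β(s,t), and for a continuous map α : G → V define δα : G × G → V by δα(s,t) := s • α(t) − α(st) + α(s). Define α(t) := −∫_G v • β(v⁻¹, t) dμ(v) (a Bochner integral). Then α is continuous and for all s, t ∈ G, δα(s,t) + β(s,t) = ∫_G v • (δβ)(v⁻¹, s, t) dμ(v). -/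
open MeasureTheory

/-- Integration against a finite measure is a Lipschitz map on `C(Y, V)`. -/
lemma continuous_integral_continuousMap {Y : Type*} [TopologicalSpace Y] [CompactSpace Y]
    [MeasurableSpace Y] [BorelSpace Y] (μ : Measure Y) [IsProbabilityMeasure μ]
    {V : Type*} [NormedAddCommGroup V] [NormedSpace ℝ V] [CompleteSpace V] :
    Continuous fun g : C(Y, V) => ∫ y, g y ∂μ := by
  have key : LipschitzWith 1 fun g : C(Y, V) => ∫ y, g y ∂μ := by
    refine LipschitzWith.of_dist_le_mul fun g h => ?_
    rw [dist_eq_norm, ← integral_sub ((g.continuous).integrable_of_hasCompactSupport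
      (HasCompactSupport.of_compactSpace _)) ((h.continuous).integrable_of_hasCompactSupport
      (HasCompactSupport.of_compactSpace _))]
    calc ‖∫ y, (g y - h y) ∂μ‖ ≤ ‖g - h‖ * (μ Set.univ).toReal := by
          apply norm_integral_le_of_norm_le_const
          filter_upwards with y
          exact (g - h).norm_coe_le_norm y
      _ = 1 * dist g h := by simp [dist_eq_norm]
  exact key.continuous

/-- For a compact group `G` with Haar probability measure `μ` acting
continuously by linear isometries on a real Banach space `V`, and a continuous
`β : G × G → V`, the averaged cochain `α t := -∫ v, v • β (v⁻¹, t) dμ v` is continuous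
and satisfies `δα (s,t) + β (s,t) = ∫ v, v • (δβ) (v⁻¹, s, t) dμ v`. -/
theorem averaging_identity {G : Type*} [Group G] [TopologicalSpace G] [IsTopologicalGroup G]
    [CompactSpace G] [MeasurableSpace G] [BorelSpace G]
    (μ : Measure G) [μ.IsHaarMeasure] [IsProbabilityMeasure μ]
    {V : Type*} [NormedAddCommGroup V] [NormedSpace ℝ V] [CompleteSpace V]
    (σ : G →* (V ≃ₗᵢ[ℝ] V)) (hσ : Continuous fun p : G × V => σ p.1 p.2)
    (β : G → G → V) (hβ : Continuous fun p : G × G => β p.1 p.2)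
    (α : G → V) (hα : ∀ t : G, α t = -∫ v : G, σ v (β v⁻¹ t) ∂μ) :
    Continuous α ∧
      ∀ s t : G,
        (σ s (α t) - α (s * t) + α s) + β s t =
          ∫ v : G,
            σ v (σ v⁻¹ (β s t) - β (v⁻¹ * s) t + β v⁻¹ (s * t) - β v⁻¹ s) ∂μ := by
  -- basic continuity facts
  have hcont : ∀ t : G, Continuous fun v : G => σ v (β v⁻¹ t) := by
    intro t
    exact hσ.comp (continuous_id.prodMk
      (hβ.comp ((continuous_inv).prodMk continuous_const)))
  have hcont2 : ∀ s t : G, Continuous fun v : G => σ v (β (v⁻¹ * s) t) := by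
    intro s t
    exact hσ.comp (continuous_id.prodMk
      (hβ.comp (((continuous_inv).mul continuous_const).prodMk continuous_const)))
  have hint : ∀ t : G, Integrable (fun v : G => σ v (β v⁻¹ t)) μ := fun t =>
    (hcont t).integrable_of_hasCompactSupport (HasCompactSupport.of_compactSpace _)
  have hint2 : ∀ s t : G, Integrable (fun v : G => σ v (β (v⁻¹ * s) t)) μ := fun s t =>
    (hcont2 s t).integrable_of_hasCompactSupport (HasCompactSupport.of_compactSpace _)
  constructor
  · -- continuity of α
    have hF : Continuous fun p : G × G => σ p.2 (β p.2⁻¹ p.1) := by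
      exact hσ.comp (continuous_snd.prodMk
        (hβ.comp ((continuous_snd.inv).prodMk continuous_fst)))
    have : Continuous fun t : G => ∫ v, ((ContinuousMap.mk _ hF).curry t) v ∂μ :=
      (continuous_integral_continuousMap μ).comp (ContinuousMap.mk _ hF).curry.continuous
    have hα' : α = fun t => -∫ v, ((ContinuousMap.mk _ hF).curry t) v ∂μ := by
      funext t
      rw [hα t]
      rfl
    rw [hα']
    exact this.neg
  · intro s t
    -- change of variables for the first term
    have key : σ s (α t) = -∫ v : G, σ v (β (v⁻¹ * s) t) ∂μ := by
      rw [hα t, map_neg]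
      congr 1
      have h0 : σ s (∫ v : G, σ v (β v⁻¹ t) ∂μ) = ∫ v : G, σ s (σ v (β v⁻¹ t)) ∂μ := by
        exact ((σ s).toLinearIsometry.integral_comp_comm _).symm
      rw [h0]
      have h1 : ∀ v : G, σ s (σ v (β v⁻¹ t)) = σ (s * v) (β ((s * v)⁻¹ * s) t) := by
        intro v
        rw [map_mul]
        simp [mul_assoc]
      simp_rw [h1]
      exact (integral_mul_left_eq_self (fun w : G => σ w (β (w⁻¹ * s) t)) s)
    rw [key, hα (s * t), hα s]
    have hsplit : ∀ v : G,
        σ v (σ v⁻¹ (β s t) - β (v⁻¹ * s) t + β v⁻¹ (s * t) - β v⁻¹ s) =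
          β s t - σ v (β (v⁻¹ * s) t) + σ v (β v⁻¹ (s * t)) - σ v (β v⁻¹ s) := by
      intro v
      rw [map_sub, map_add, map_sub]
      congr 2
      · congr 1
        rw [map_inv]
        exact (σ v).apply_symm_apply _
    simp_rw [hsplit]
    have iA : Integrable (fun v : G => β s t - σ v (β (v⁻¹ * s) t)) μ := by
      exact (integrable_const (β s t)).sub (hint2 s t)
    have iB : Integrable
        (fun v : G => β s t - σ v (β (v⁻¹ * s) t) + σ v (β v⁻¹ (s * t))) μ := by
      exact iA.add (hint (s * t))
    rw [integral_sub iB (hint s), integral_add iA (hint (s * t)),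
      integral_sub (integrable_const (β s t)) (hint2 s t), integral_const]
    simp
    abel
end

section
/- Let G be a compact topological group with Haar probability measure μ, and let V be a real Banach space on which G acts continuously by linear isometries, written (s, v) ↦ s • v. For a continuous β : G × G → V define δβ(s,t,u) := s • β(t,u) − β(st,u) + β(s,tu) − β(s,t), and set α(t) := −∫_G v • β(v⁻¹, t) dμ(v). Then sup_{s,t ∈ G} ‖s • α(t) − α(st) + α(s) + β(s,t)‖ ≤ sup_{s,t,u ∈ G} ‖δβ(s,t,u)‖. In particular, if sup ‖δβ‖ ≤ ε then β is uniformly within ε of the coboundary −δα. -/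
open MeasureTheory

/-- With `G` a compact group with Haar probability measure acting
continuously by linear isometries on a real Banach space `V`, for continuous
`β : G × G → V` and `α t := -∫ v, v • β (v⁻¹, t) dμ v`, we have
`sup_{s,t} ‖s • α t - α (st) + α s + β (s,t)‖ ≤ sup_{s,t,u} ‖δβ (s,t,u)‖`. -/
theorem averaging_estimate {G : Type*} [Group G] [TopologicalSpace G] [IsTopologicalGroup G]
    [CompactSpace G] [MeasurableSpace G] [BorelSpace G]
    (μ : Measure G) [μ.IsHaarMeasure] [IsProbabilityMeasure μ]
    {V : Type*} [NormedAddCommGroup V] [NormedSpace ℝ V] [CompleteSpace V]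
    (σ : G →* (V ≃ₗᵢ[ℝ] V)) (hσ : Continuous fun p : G × V => σ p.1 p.2)
    (β : G → G → V) (hβ : Continuous fun p : G × G => β p.1 p.2)
    (α : G → V) (hα : ∀ t : G, α t = -∫ v : G, σ v (β v⁻¹ t) ∂μ) :
    (⨆ p : G × G, ‖σ p.1 (α p.2) - α (p.1 * p.2) + α p.1 + β p.1 p.2‖) ≤
      ⨆ q : G × G × G,
        ‖σ q.1 (β q.2.1 q.2.2) - β (q.1 * q.2.1) q.2.2 + β q.1 (q.2.1 * q.2.2)
          - β q.1 q.2.1‖ := by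
  -- the coboundary of β
  set δ : G × G × G → V := fun q =>
    σ q.1 (β q.2.1 q.2.2) - β (q.1 * q.2.1) q.2.2 + β q.1 (q.2.1 * q.2.2) - β q.1 q.2.1 with hδ
  -- continuity of δ
  have hδc : Continuous δ := by
    apply Continuous.sub
    apply Continuous.add
    apply Continuous.sub
    · exact hσ.comp (continuous_fst.prodMk (hβ.comp
        ((continuous_fst.comp continuous_snd).prodMk (continuous_snd.comp continuous_snd))))
    · exact hβ.comp ((continuous_fst.mul (continuous_fst.comp continuous_snd)).prodMk
        (continuous_snd.comp continuous_snd))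
    · exact hβ.comp (continuous_fst.prodMk
        ((continuous_fst.comp continuous_snd).mul (continuous_snd.comp continuous_snd)))
    · exact hβ.comp (continuous_fst.prodMk (continuous_fst.comp continuous_snd))
  set C : ℝ := ⨆ q : G × G × G, ‖δ q‖ with hC
  have hbdd : BddAbove (Set.range fun q : G × G × G => ‖δ q‖) :=
    (isCompact_range hδc.norm).bddAbove
  have hC0 : (0 : ℝ) ≤ C :=
    le_trans (norm_nonneg (δ (1, 1, 1))) (le_ciSup hbdd (1, 1, 1))
  -- integrability of continuous functions
  have hint : ∀ f : G → V, Continuous f → Integrable f μ := fun f hf =>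
    hf.integrable_of_hasCompactSupport (HasCompactSupport.of_compactSpace f)
  -- continuity of v ↦ σ v (g v)
  have hcomp : ∀ g : G → V, Continuous g → Continuous (fun v : G => σ v (g v)) := by
    intro g hg
    exact hσ.comp (continuous_id.prodMk hg)
  have hβ1 : ∀ t : G, Continuous fun v : G => β v t := fun t =>
    hβ.comp (continuous_id.prodMk continuous_const)
  refine Real.iSup_le (fun p => ?_) hC0
  obtain ⟨s, t⟩ := p
  -- the key identity
  have key : σ s (α t) - α (s * t) + α s + β s t
      = ∫ v : G, σ v (δ (v⁻¹, s, t)) ∂μ := by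
    have h1 : σ s (α t) = -∫ v : G, σ v (β (v⁻¹ * s) t) ∂μ := by
      rw [hα t, map_neg]
      congr 1
      have h := (σ s).toLinearIsometry.integral_comp_comm (μ := μ)
        (fun v : G => σ v (β v⁻¹ t))
      simp only [LinearIsometryEquiv.coe_toLinearIsometry] at h
      rw [← h]
      have heq : (fun v : G => σ s (σ v (β v⁻¹ t)))
          = fun v : G => (fun w : G => σ w (β (w⁻¹ * s) t)) (s * v) := by
        funext v
        have hv : (s * v)⁻¹ * s = v⁻¹ := by group
        simp only [hv, map_mul σ]
        rfl
      rw [heq, integral_mul_left_eq_self (fun w : G => σ w (β (w⁻¹ * s) t)) s]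
    have hI1 : Integrable (fun v : G => σ v (β (v⁻¹ * s) t)) μ :=
      hint _ (hcomp _ ((hβ1 t).comp (continuous_inv.mul continuous_const)))
    have hI2 : Integrable (fun v : G => σ v (β v⁻¹ (s * t))) μ :=
      hint _ (hcomp _ ((hβ1 (s * t)).comp continuous_inv))
    have hI3 : Integrable (fun v : G => σ v (β v⁻¹ s)) μ :=
      hint _ (hcomp _ ((hβ1 s).comp continuous_inv))
    have hI4 : Integrable (fun _ : G => β s t) μ := integrable_const _
    rw [h1, hα (s * t), hα s]
    rw [show -∫ v : G, σ v (β (v⁻¹ * s) t) ∂μ - -(∫ v : G, σ v (β v⁻¹ (s * t)) ∂μ)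
        + -∫ v : G, σ v (β v⁻¹ s) ∂μ + β s t
        = ((∫ v : G, σ v (β v⁻¹ (s * t)) ∂μ) - ∫ v : G, σ v (β (v⁻¹ * s) t) ∂μ)
          - (∫ v : G, σ v (β v⁻¹ s) ∂μ) + ∫ _ : G, β s t ∂μ by
      rw [integral_const]; simp; abel]
    rw [← integral_sub hI2 hI1,
      ← integral_sub (μ := μ)
        (f := fun a : G => σ a (β a⁻¹ (s * t)) - σ a (β (a⁻¹ * s) t))
        (g := fun v : G => σ v (β v⁻¹ s)) (hI2.sub hI1) hI3,
      ← integral_add (μ := μ)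
        (f := fun a : G => σ a (β a⁻¹ (s * t)) - σ a (β (a⁻¹ * s) t) - σ a (β a⁻¹ s))
        (g := fun _ : G => β s t) ((hI2.sub hI1).sub hI3) hI4]
    congr 1
    funext v
    have hσσ : ∀ x : V, σ v (σ v⁻¹ x) = x := by
      intro x
      have h1σ : σ v * σ v⁻¹ = 1 := by rw [← map_mul σ]; simp
      calc σ v (σ v⁻¹ x) = (σ v * σ v⁻¹) x := rfl
        _ = x := by rw [h1σ]; rfl
    simp only [hδ, map_sub, map_add, hσσ, inv_inv]
    abel
  calc ‖σ s (α t) - α (s * t) + α s + β s t‖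
      = ‖∫ v : G, σ v (δ (v⁻¹, s, t)) ∂μ‖ := by rw [key]
    _ ≤ ∫ v : G, ‖σ v (δ (v⁻¹, s, t))‖ ∂μ := norm_integral_le_integral_norm _
    _ ≤ ∫ _ : G, C ∂μ := by
        apply integral_mono _ (integrable_const _)
        · intro v
          simp only [LinearIsometryEquiv.norm_map]
          exact le_ciSup hbdd (v⁻¹, s, t)
        · exact (hint _ (hcomp _ (hδc.comp
            (continuous_inv.prodMk (continuous_const.prodMk continuous_const))))).norm
    _ = C := by simp
end

section
/- Let G be a compact topological group with Haar probability measure μ, and let V be a real Banach space on which G acts continuously by linear isometries. For n ≥ 1 and a continuous map ρ : Gⁿ → V define the coboundary δρ : Gⁿ⁺¹ → V by δρ(s₀, s₁, …, sₙ) := s₀ • ρ(s₁, …, sₙ) + Σ_{i=1}^{n} (−1)^i ρ(s₀, …, s_{i−1} s_i, …, sₙ) + (−1)^{n+1} ρ(s₀, …, s_{n−1}), and for a continuous β : Gⁿ⁺¹ → V define hβ : Gⁿ → V by (hβ)(t₁, …, tₙ) := (−1)^{n+1} ∫_G β(t₁, …, tₙ, v) dμ(v). Then for every continuous ρ : Gⁿ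 → V (n ≥ 1) one has δ(hρ) + h(δρ) = ρ, i.e. h is a contracting homotopy for the continuous inhomogeneous cochain complex in positive degrees. -/
open MeasureTheory

/-- The inhomogeneous coboundary operator on continuous cochains:
`δρ(s₀,…,sₙ) = s₀ • ρ(s₁,…,sₙ) + Σ_{i=1}^{n} (-1)^i ρ(s₀,…,s_{i-1}s_i,…,sₙ)
  + (-1)^{n+1} ρ(s₀,…,s_{n-1})`. -/
def coboundary {G : Type*} [Group G] {V : Type*} [NormedAddCommGroup V] [NormedSpace ℝ V]
    (σ : G →* (V ≃ₗᵢ[ℝ] V)) (n : ℕ) (ρ : (Fin n → G) → V) :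
    (Fin (n + 1) → G) → V := fun s =>
  σ (s 0) (ρ fun i => s i.succ)
    + ∑ i : Fin n, ((-1 : ℝ) ^ (i.val + 1)) •
        ρ (fun j => if j.val < i.val then s j.castSucc
            else if j.val = i.val then s j.castSucc * s j.succ
            else s j.succ)
    + ((-1 : ℝ) ^ (n + 1)) • ρ (fun j => s j.castSucc)

/-- The averaging (contracting-homotopy) operator on cochains:
`(hβ)(t₁,…,tₙ) = (-1)^{n+1} ∫_G β(t₁,…,tₙ,v) dμ(v)` for an `(n+1)`-cochain `β`. -/
noncomputable def avg {G : Type*} [Group G] [TopologicalSpace G] [MeasurableSpace G]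
    {V : Type*} [NormedAddCommGroup V] [NormedSpace ℝ V]
    (μ : Measure G) (n : ℕ) (β : (Fin (n + 1) → G) → V) : (Fin n → G) → V :=
  fun t => ((-1 : ℝ) ^ (n + 1)) • ∫ v : G, β (Fin.snoc t v) ∂μ

/-- For a compact group `G` with Haar probability measure `μ` acting
continuously by linear isometries on a real Banach space `V`, the averaging operator `h`
is a contracting homotopy for the continuous inhomogeneous cochain complex in positive
degrees: `δ(hρ) + h(δρ) = ρ` for every continuous cochain `ρ : Gⁿ → V` with `n ≥ 1`
(here `n = m + 1`). -/
theorem contracting_homotopy {G : Type*} [Group G] [TopologicalSpace G] [IsTopologicalGroup G]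
    [CompactSpace G] [MeasurableSpace G] [BorelSpace G]
    (μ : Measure G) [μ.IsHaarMeasure] [IsProbabilityMeasure μ]
    {V : Type*} [NormedAddCommGroup V] [NormedSpace ℝ V] [CompleteSpace V]
    (σ : G →* (V ≃ₗᵢ[ℝ] V)) (hσ : Continuous fun p : G × V => σ p.1 p.2)
    (m : ℕ) (ρ : (Fin (m + 1) → G) → V) (hρ : Continuous ρ) :
    coboundary σ m (avg μ m ρ) + avg μ (m + 1) (coboundary σ (m + 1) ρ) = ρ := by
  funext s
  -- continuity of snoc in the last variable
  have contsnoc : ∀ t : Fin m → G, Continuous (fun v : G => (Fin.snoc t v : Fin (m+1) → G)) := by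
    intro t
    refine continuous_pi fun j => ?_
    refine Fin.lastCases ?_ (fun k => ?_) j
    · simpa using continuous_id'
    · simpa using continuous_const
  have hint : ∀ t : Fin m → G, Integrable (fun v => ρ (Fin.snoc t v)) μ := fun t =>
    (hρ.comp (contsnoc t)).integrable_of_hasCompactSupport (HasCompactSupport.of_compactSpace _)
  -- the integrand identity
  have hψ : ∀ v : G, coboundary σ (m+1) ρ (Fin.snoc s v) =
      σ (s 0) (ρ (Fin.snoc (fun i : Fin m => s i.succ) v))
      + (∑ i : Fin m, ((-1:ℝ) ^ (i.val + 1)) •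
          ρ (Fin.snoc (fun j : Fin m => if j.val < i.val then s j.castSucc
              else if j.val = i.val then s j.castSucc * s j.succ else s j.succ) v)
        + ((-1:ℝ) ^ (m+1)) • ρ (Fin.snoc (fun j : Fin m => s j.castSucc) (s (Fin.last m) * v)))
      + ((-1:ℝ) ^ (m+1+1)) • ρ s := by
    intro v
    simp only [coboundary]
    rw [Fin.sum_univ_castSucc]
    congr 1
    · congr 1
      · congr 1
        · congr 1
          funext i
          refine Fin.lastCases ?_ (fun k => ?_) i
          · simp
          · rw [Fin.succ_castSucc, Fin.snoc_castSucc, Fin.snoc_castSucc]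
      · congr 1
        · refine Finset.sum_congr rfl fun i _ => ?_
          congr 1
          congr 1
          funext j
          refine Fin.lastCases ?_ (fun k => ?_) j
          · have hi := i.isLt
            simp only [Fin.val_last, Fin.coe_castSucc]
            rw [if_neg (by omega), if_neg (by omega)]
            simp [Fin.succ_last]
          · simp only [Fin.coe_castSucc, Fin.snoc_castSucc, Fin.succ_castSucc]
        · simp only [Fin.val_last]
          congr 1
          congr 1
          funext j
          refine Fin.lastCases ?_ (fun k => ?_) j
          · simp only [Fin.val_last]
            rw [if_neg (by omega)]
            simp [Fin.succ_last]
          · have hk := k.isLt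
            simp only [Fin.coe_castSucc, Fin.val_last, Fin.snoc_castSucc]
            rw [if_pos (by omega)]
    · congr 1
      congr 1
      funext j
      exact Fin.snoc_castSucc ..
  -- rewrite the averaged coboundary
  have h1 : Integrable (fun v => σ (s 0) (ρ (Fin.snoc (fun i : Fin m => s i.succ) v))) μ :=
    (((σ (s 0)).continuous.comp (hρ.comp (contsnoc _)))).integrable_of_hasCompactSupport
      (HasCompactSupport.of_compactSpace _)
  have h2 : Integrable (fun v => ∑ i : Fin m, ((-1:ℝ) ^ (i.val + 1)) •
      ρ (Fin.snoc (fun j : Fin m => if j.val < i.val then s j.castSucc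
          else if j.val = i.val then s j.castSucc * s j.succ else s j.succ) v)) μ :=
    integrable_finset_sum _ fun i _ => (hint _).smul _
  have h3 : Integrable (fun v => ((-1:ℝ) ^ (m+1)) •
      ρ (Fin.snoc (fun j : Fin m => s j.castSucc) (s (Fin.last m) * v))) μ := by
    refine Integrable.smul _ ?_
    have : Continuous fun v : G => ρ (Fin.snoc (fun j : Fin m => s j.castSucc) (s (Fin.last m) * v)) :=
      (hρ.comp (contsnoc _)).comp (continuous_mul_left _)
    exact this.integrable_of_hasCompactSupport (HasCompactSupport.of_compactSpace _)
  have hσ0 : (∫ v, σ (s 0) (ρ (Fin.snoc (fun i : Fin m => s i.succ) v)) ∂μ)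
      = σ (s 0) (∫ v, ρ (Fin.snoc (fun i : Fin m => s i.succ) v) ∂μ) := by
    have := ContinuousLinearEquiv.integral_comp_comm ((σ (s 0)).toContinuousLinearEquiv)
      (fun v => ρ (Fin.snoc (fun i : Fin m => s i.succ) v)) (μ := μ)
    simpa using this
  have hHaar : (∫ v, ρ (Fin.snoc (fun j : Fin m => s j.castSucc) (s (Fin.last m) * v)) ∂μ)
      = ∫ v, ρ (Fin.snoc (fun j : Fin m => s j.castSucc) v) ∂μ :=
    integral_mul_left_eq_self (fun v => ρ (Fin.snoc (fun j : Fin m => s j.castSucc) v)) _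
  have hB : avg μ (m+1) (coboundary σ (m+1) ρ) s
      = ((-1:ℝ)^(m+1+1)) • (σ (s 0) (∫ v, ρ (Fin.snoc (fun i : Fin m => s i.succ) v) ∂μ)
        + (∑ i : Fin m, ((-1:ℝ)^(i.val+1)) •
            ∫ v, ρ (Fin.snoc (fun j : Fin m => if j.val < i.val then s j.castSucc
                else if j.val = i.val then s j.castSucc * s j.succ else s j.succ) v) ∂μ
          + ((-1:ℝ)^(m+1)) • ∫ v, ρ (Fin.snoc (fun j : Fin m => s j.castSucc) v) ∂μ)
        + ((-1:ℝ)^(m+1+1)) • ρ s) := by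
    rw [show avg μ (m+1) (coboundary σ (m+1) ρ) s
        = ((-1:ℝ)^(m+1+1)) • ∫ v, coboundary σ (m+1) ρ (Fin.snoc s v) ∂μ from rfl]
    congr 1
    simp only [hψ]
    have h23 : Integrable (fun v => (∑ i : Fin m, ((-1:ℝ) ^ (i.val + 1)) •
        ρ (Fin.snoc (fun j : Fin m => if j.val < i.val then s j.castSucc
            else if j.val = i.val then s j.castSucc * s j.succ else s j.succ) v))
        + ((-1:ℝ) ^ (m+1)) • ρ (Fin.snoc (fun j : Fin m => s j.castSucc) (s (Fin.last m) * v))) μ :=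
      h2.add h3
    have h123 : Integrable (fun v => σ (s 0) (ρ (Fin.snoc (fun i : Fin m => s i.succ) v))
        + ((∑ i : Fin m, ((-1:ℝ) ^ (i.val + 1)) •
        ρ (Fin.snoc (fun j : Fin m => if j.val < i.val then s j.castSucc
            else if j.val = i.val then s j.castSucc * s j.succ else s j.succ) v))
        + ((-1:ℝ) ^ (m+1)) • ρ (Fin.snoc (fun j : Fin m => s j.castSucc) (s (Fin.last m) * v)))) μ :=
      h1.add h23
    have h4 : ∀ i ∈ (Finset.univ : Finset (Fin m)), Integrable (fun v => ((-1:ℝ) ^ (i.val + 1)) •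
        ρ (Fin.snoc (fun j : Fin m => if j.val < i.val then s j.castSucc
            else if j.val = i.val then s j.castSucc * s j.succ else s j.succ) v)) μ :=
      fun i _ => (hint _).smul _
    rw [integral_add h123 (integrable_const _),
        integral_add h1 h23, integral_add h2 h3,
        integral_finset_sum _ h4]
    simp only [integral_smul, integral_const, probReal_univ, one_smul]
    rw [hσ0, hHaar]
  rw [Pi.add_apply, hB]
  simp only [coboundary, avg, _root_.map_smul]
  have hpow : ((-1:ℝ))^(m+1+1) = -((-1:ℝ)^(m+1)) := by rw [pow_succ]; ring
  simp only [hpow]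
  rcases neg_one_pow_eq_or ℝ (m+1) with h | h <;> simp only [h] <;>
    simp only [one_smul, neg_smul, smul_neg, neg_neg, Finset.sum_neg_distrib] <;> abel
end

section
/- Let G be a compact topological group with Haar probability measure μ, let V be a real Banach space on which G acts continuously by linear isometries, and let n ≥ 1. Let ρ : Gⁿ → V be continuous, with coboundary δρ(s₀, …, sₙ) := s₀ • ρ(s₁, …, sₙ) + Σ_{i=1}^{n} (−1)^i ρ(s₀, …, s_{i−1} s_i, …, sₙ) + (−1)^{n+1} ρ(s₀, …, s_{n−1}). Define hβ for a continuous (n+1)-cochain β by (hβ)(t₁, …, tₙ) := (−1)^{n+1} ∫_G β(t₁, …, tₙ, v) dμ(v), and set ρ' := δ(h ρ), a continuous n-cochain. Then ρ' is an n-cocycle (δρ' = 0), ρ' is moreover the coboundary of a continuous (n−1)-cochain, and sup_{Gⁿ} ‖ρ'(x) − ρ(x)‖ ≤ sup_{Gⁿ⁺¹} ‖δρ(y)‖. In particular, every continuous almost-n-cocycle ρ (one with sup ‖δρ‖ ≤ ε) is uniformly within ε of an actual continuous n-cocycle, which is even a coboundary. -/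
open MeasureTheory

section Aux

universe u₁ u₂

variable {G : Type u₁} [Group G] {V : Type u₂} [NormedAddCommGroup V] [NormedSpace ℝ V]

theorem coboundary_apply (σ : G →* (V ≃ₗᵢ[ℝ] V)) (n : ℕ) (ρ : (Fin n → G) → V)
    (s : Fin (n + 1) → G) :
    coboundary σ n ρ s = σ (s 0) (ρ fun i => s i.succ)
      + ∑ j : Fin (n + 1), ((-1 : ℝ) ^ (j.val + 1)) • ρ (Fin.contractNth j (· * ·) s) := by
  have hlast : (fun j : Fin n => s j.castSucc) = Fin.contractNth (Fin.last n) (· * ·) s := by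
    funext k
    rw [Fin.contractNth_apply_of_lt _ _ _ _ (by simpa using k.isLt)]
  conv_rhs => rw [Fin.sum_univ_castSucc]
  rw [coboundary, add_assoc, hlast]
  rfl

theorem contractNth_down {n : ℕ} (j : Fin (n + 1)) (g : Fin (n + 1) → ULift.{u₂} G)
    (i : Fin n) :
    (Fin.contractNth j (· * ·) g i).down
      = Fin.contractNth j (· * ·) (fun i => (g i).down) i := by
  rcases lt_trichotomy (i.val) (j.val) with h | h | h
  · rw [Fin.contractNth_apply_of_lt _ _ _ _ h, Fin.contractNth_apply_of_lt _ _ _ _ h]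
  · rw [Fin.contractNth_apply_of_eq _ _ _ _ h, Fin.contractNth_apply_of_eq _ _ _ _ h]
    rfl
  · rw [Fin.contractNth_apply_of_gt _ _ _ _ h, Fin.contractNth_apply_of_gt _ _ _ _ h]

def uRep (σ : G →* (V ≃ₗᵢ[ℝ] V)) :
    Representation (ULift.{max u₁ u₂} ℝ) (ULift.{u₂} G) (ULift.{u₁} V) where
  toFun g :=
    { toFun := fun x => ⟨σ g.down x.down⟩
      map_add' := fun x y => ULift.ext _ _ (by simp)
      map_smul' := fun c x => ULift.ext _ _ (by
        simp [ULift.smul_def, ULift.smul_down, _root_.map_smul]) }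
  map_one' := by ext x; simp
  map_mul' g h := by ext x; simp

theorem down_sum {ι : Type*} (s : Finset ι) (f : ι → ULift.{u₁} V) :
    (∑ i ∈ s, f i).down = ∑ i ∈ s, (f i).down :=
  map_sum (AddEquiv.ulift) f s

theorem down_neg_one_pow_smul (p : ℕ) (x : ULift.{u₁} V) :
    (((-1 : ULift.{max u₁ u₂} ℝ) ^ p) • x).down = (-1 : ℝ) ^ p • x.down := by
  rw [ULift.smul_def, ULift.smul_down]
  congr 1

def liftC (σ : G →* (V ≃ₗᵢ[ℝ] V)) {j : ℕ} (ρ : (Fin j → G) → V) :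
    (Fin j → ULift.{u₂} G) → (Rep.of (uRep σ)) :=
  fun s => ⟨ρ (fun i => (s i).down)⟩

theorem liftC_coboundary (σ : G →* (V ≃ₗᵢ[ℝ] V)) {j : ℕ} (ρ : (Fin j → G) → V) :
    liftC σ (coboundary σ j ρ)
      = (inhomogeneousCochains.d (Rep.of (uRep σ)) j).hom (liftC σ ρ) := by
  funext g
  have hd : (inhomogeneousCochains.d (Rep.of (uRep σ)) j).hom (liftC σ ρ) g
      = (Rep.of (uRep σ)).ρ (g 0) (liftC σ ρ fun i => g i.succ)
        + ∑ jj : Fin (j + 1), ((-1 : ULift.{max u₁ u₂} ℝ) ^ (jj.val + 1)) •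
            liftC σ ρ (Fin.contractNth jj (· * ·) g) := rfl
  rw [hd]
  apply ULift.ext
  rw [ULift.add_down, down_sum]
  show coboundary σ j ρ (fun i => (g i).down) = _
  rw [coboundary_apply]
  congr 1
  refine Finset.sum_congr rfl fun jj _ => ?_
  rw [down_neg_one_pow_smul]
  exact congrArg (fun z => ((-1 : ℝ) ^ (jj.val + 1)) • ρ z)
    (funext fun i => (contractNth_down jj g i).symm)

theorem coboundary_coboundary (σ : G →* (V ≃ₗᵢ[ℝ] V)) (n : ℕ) (ρ : (Fin n → G) → V) :
    coboundary σ (n + 1) (coboundary σ n ρ) = 0 := by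
  classical
  set A := Rep.of (uRep σ)
  have hdd : ∀ x, (inhomogeneousCochains.d A (n + 1)).hom ((inhomogeneousCochains.d A n).hom x) = 0 := by
    intro x
    have h := groupCohomology.inhomogeneousCochains.d_comp_d n A
    exact LinearMap.congr_fun (congrArg ModuleCat.Hom.hom h) x
  have h0 : liftC σ (coboundary σ (n + 1) (coboundary σ n ρ)) = 0 := by
    rw [liftC_coboundary, liftC_coboundary]
    exact hdd (liftC σ ρ)
  funext s
  have h1 := congrFun h0 ((fun i => ULift.up (s i)) : Fin (n + 2) → ULift.{u₂} G)
  have h2 := congrArg ULift.down h1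
  simpa [liftC] using h2

end Aux

section Analytic

variable {G : Type*} [Group G] {V : Type*} [NormedAddCommGroup V] [NormedSpace ℝ V]

theorem continuous_contractNth [TopologicalSpace G] [IsTopologicalGroup G] {n : ℕ}
    (j : Fin (n + 1)) :
    Continuous fun s : Fin (n + 1) → G => Fin.contractNth j (· * ·) s := by
  apply continuous_pi
  intro k
  simp only [Fin.contractNth]
  split_ifs with h1 h2
  · exact continuous_apply _
  · exact (continuous_apply _).mul (continuous_apply _)
  · exact continuous_apply _

theorem coboundary_continuous [TopologicalSpace G] [IsTopologicalGroup G]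
    (σ : G →* (V ≃ₗᵢ[ℝ] V)) (hσ : Continuous fun p : G × V => σ p.1 p.2) {n : ℕ}
    {α : (Fin n → G) → V} (hα : Continuous α) : Continuous (coboundary σ n α) := by
  have heq : coboundary σ n α = fun s => σ (s 0) (α fun i => s i.succ)
      + ∑ j : Fin (n + 1), ((-1 : ℝ) ^ (j.val + 1)) • α (Fin.contractNth j (· * ·) s) :=
    funext (coboundary_apply σ n α)
  rw [heq]
  have h2 : Continuous fun s : Fin (n + 1) → G => ((s 0 : G), α fun i => s i.succ) :=
    (continuous_apply 0).prodMk (hα.comp (continuous_pi fun i => continuous_apply i.succ))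
  exact Continuous.add (hσ.comp h2)
    (continuous_finset_sum _ fun j _ => (hα.comp (continuous_contractNth j)).const_smul _)

theorem continuous_snoc_left [TopologicalSpace G] {n : ℕ} (v : G) :
    Continuous fun t : Fin n → G => (Fin.snoc t v : Fin (n + 1) → G) := by
  apply continuous_pi
  intro k
  induction k using Fin.lastCases with
  | last => simp only [Fin.snoc_last]; exact continuous_const
  | cast i => simp only [Fin.snoc_castSucc]; exact continuous_apply i

theorem continuous_snoc_right [TopologicalSpace G] {n : ℕ} (t : Fin n → G) :
    Continuous fun v : G => (Fin.snoc t v : Fin (n + 1) → G) := by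
  apply continuous_pi
  intro k
  induction k using Fin.lastCases with
  | last => simp only [Fin.snoc_last]; exact continuous_id
  | cast i => simp only [Fin.snoc_castSucc]; exact continuous_const

theorem Continuous.stronglyMeasurable_of_compactSpace {X : Type*} [TopologicalSpace X]
    [CompactSpace X] [MeasurableSpace X] [OpensMeasurableSpace X] {f : X → V}
    (hf : Continuous f) : StronglyMeasurable f := by
  borelize V
  rw [stronglyMeasurable_iff_measurable_separable]
  exact ⟨hf.measurable, (isCompact_range hf).isSeparable⟩

theorem Continuous.integrable_of_compact {X : Type*} [TopologicalSpace X] [CompactSpace X]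
    [MeasurableSpace X] [OpensMeasurableSpace X] {μ : Measure X} [IsFiniteMeasure μ]
    {f : X → V} (hf : Continuous f) : Integrable f μ := by
  obtain ⟨C, hC⟩ := isCompact_univ.exists_bound_of_continuousOn hf.continuousOn
  exact (integrable_const C).mono' hf.stronglyMeasurable_of_compactSpace.aestronglyMeasurable
    (Filter.Eventually.of_forall fun x => hC x trivial)

theorem continuous_snoc_prod [TopologicalSpace G] {n : ℕ} :
    Continuous fun p : (Fin n → G) × G => (Fin.snoc p.1 p.2 : Fin (n + 1) → G) := by
  apply continuous_pi
  intro k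
  induction k using Fin.lastCases with
  | last => simp only [Fin.snoc_last]; exact continuous_snd
  | cast i => simp only [Fin.snoc_castSucc]; exact (continuous_apply i).comp continuous_fst

theorem avg_continuous [TopologicalSpace G] [CompactSpace G] [MeasurableSpace G]
    [OpensMeasurableSpace G] (μ : Measure G) [IsProbabilityMeasure μ] {n : ℕ}
    {β : (Fin (n + 1) → G) → V} (hβ : Continuous β) : Continuous (avg μ n β) := by
  refine Continuous.const_smul ?_ _
  rw [continuous_iff_continuousAt]
  intro t₀
  refine Metric.tendsto_nhds.mpr fun ε hε => ?_
  have hco : Continuous fun p : (Fin n → G) × G =>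
      ‖β (Fin.snoc p.1 p.2) - β (Fin.snoc t₀ p.2)‖ :=
    ((hβ.comp continuous_snoc_prod).sub
      ((hβ.comp (continuous_snoc_right t₀)).comp continuous_snd)).norm
  have hWopen : IsOpen {p : (Fin n → G) × G |
      ‖β (Fin.snoc p.1 p.2) - β (Fin.snoc t₀ p.2)‖ < ε / 2} := isOpen_lt hco continuous_const
  have hsub : ({t₀} ×ˢ (Set.univ : Set G)) ⊆ {p : (Fin n → G) × G |
      ‖β (Fin.snoc p.1 p.2) - β (Fin.snoc t₀ p.2)‖ < ε / 2} := by
    rintro ⟨t, v⟩ ⟨ht, -⟩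
    simp only [Set.mem_singleton_iff] at ht
    subst ht
    simp only [Set.mem_setOf_eq, sub_self, norm_zero]
    exact half_pos hε
  obtain ⟨U, Vo, hUopen, _, hU, hV, hUV⟩ :=
    generalized_tube_lemma isCompact_singleton isCompact_univ hWopen hsub
  filter_upwards [hUopen.mem_nhds (hU rfl)] with t ht
  have hInt : Integrable (fun v => β (Fin.snoc t v)) μ :=
    (hβ.comp (continuous_snoc_right t)).integrable_of_compact
  have hInt₀ : Integrable (fun v => β (Fin.snoc t₀ v)) μ :=
    (hβ.comp (continuous_snoc_right t₀)).integrable_of_compact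
  rw [dist_eq_norm, ← integral_sub hInt hInt₀]
  have hle : ‖∫ v, (β (Fin.snoc t v) - β (Fin.snoc t₀ v)) ∂μ‖
      ≤ (ε / 2) * (μ Set.univ).toReal :=
    norm_integral_le_of_norm_le_const (Filter.Eventually.of_forall fun v =>
      le_of_lt (hUV (Set.mk_mem_prod ht (hV (Set.mem_univ v)))))
  rw [measure_univ] at hle
  simp only [ENNReal.toReal_one, mul_one] at hle
  linarith

end Analytic

section FinGym

variable {α : Type*}

theorem snoc_zero' {m : ℕ} (t : Fin (m + 1) → α) (v : α) :
    (Fin.snoc t v : Fin (m + 2) → α) 0 = t 0 := by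
  have h : (0 : Fin (m + 2)) = Fin.castSucc 0 := rfl
  rw [h, Fin.snoc_castSucc]

theorem snoc_comp_succ {m : ℕ} (t : Fin (m + 1) → α) (v : α) :
    (fun i : Fin (m + 1) => (Fin.snoc t v : Fin (m + 2) → α) i.succ)
      = Fin.snoc (fun i : Fin m => t i.succ) v := by
  funext k
  induction k using Fin.lastCases with
  | last => rw [Fin.succ_last, Fin.snoc_last, Fin.snoc_last]
  | cast i => rw [Fin.succ_castSucc, Fin.snoc_castSucc, Fin.snoc_castSucc]

theorem contract_snoc_castSucc {m : ℕ} [Mul α] (i : Fin m) (t : Fin (m + 1) → α) (v : α) :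
    Fin.contractNth (i.castSucc.castSucc) (· * ·) (Fin.snoc t v : Fin (m + 2) → α)
      = Fin.snoc (Fin.contractNth i.castSucc (· * ·) t) v := by
  funext k
  induction k using Fin.lastCases with
  | last =>
    rw [Fin.contractNth_apply_of_gt _ _ _ _ (by simp), Fin.succ_last, Fin.snoc_last,
      Fin.snoc_last]
  | cast k =>
    rw [Fin.snoc_castSucc]
    rcases lt_trichotomy (k.val) (i.val) with h | h | h
    · rw [Fin.contractNth_apply_of_lt _ _ _ _ (by simpa using h),
        Fin.contractNth_apply_of_lt _ _ _ _ (by simpa using h), Fin.snoc_castSucc]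
    · rw [Fin.contractNth_apply_of_eq _ _ _ _ (by simpa using h),
        Fin.contractNth_apply_of_eq _ _ _ _ (by simpa using h), Fin.succ_castSucc,
        Fin.snoc_castSucc, Fin.snoc_castSucc]
    · rw [Fin.contractNth_apply_of_gt _ _ _ _ (by simpa using h),
        Fin.contractNth_apply_of_gt _ _ _ _ (by simpa using h), Fin.succ_castSucc,
        Fin.snoc_castSucc]

theorem contract_snoc_last {m : ℕ} [Mul α] (t : Fin (m + 1) → α) (v : α) :
    Fin.contractNth ((Fin.last m).castSucc) (· * ·) (Fin.snoc t v : Fin (m + 2) → α)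
      = Fin.snoc (fun k : Fin m => t k.castSucc) (t (Fin.last m) * v) := by
  funext k
  induction k using Fin.lastCases with
  | last =>
    rw [Fin.contractNth_apply_of_eq _ _ _ _ (by simp), Fin.snoc_last, Fin.succ_last,
      Fin.snoc_last, Fin.snoc_castSucc]
  | cast k =>
    rw [Fin.contractNth_apply_of_lt _ _ _ _ (by simp), Fin.snoc_castSucc,
      Fin.snoc_castSucc]

theorem contract_snoc_top {m : ℕ} [Mul α] (t : Fin (m + 1) → α) (v : α) :
    Fin.contractNth (Fin.last (m + 1)) (· * ·) (Fin.snoc t v : Fin (m + 2) → α) = t := by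
  funext k
  rw [Fin.contractNth_apply_of_lt _ _ _ _ (by simpa using k.isLt), Fin.snoc_castSucc]

theorem contract_last {m : ℕ} [Mul α] (t : Fin (m + 1) → α) :
    Fin.contractNth (Fin.last m) (· * ·) t = fun k : Fin m => t k.castSucc := by
  funext k
  rw [Fin.contractNth_apply_of_lt _ _ _ _ (by simp)]

end FinGym

section Key

variable {G : Type*} [Group G] [TopologicalSpace G] [IsTopologicalGroup G] [CompactSpace G]
  [MeasurableSpace G] [BorelSpace G] {V : Type*} [NormedAddCommGroup V] [NormedSpace ℝ V]
  [CompleteSpace V]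

theorem key_identity (μ : Measure G) [μ.IsHaarMeasure] [IsProbabilityMeasure μ]
    (σ : G →* (V ≃ₗᵢ[ℝ] V)) (m : ℕ) (ρ : (Fin (m + 1) → G) → V) (hρ : Continuous ρ)
    (t : Fin (m + 1) → G) :
    coboundary σ m (avg μ m ρ) t = ρ t - avg μ (m + 1) (coboundary σ (m + 1) ρ) t := by
  set I : (Fin m → G) → V := fun u => ∫ v, ρ (Fin.snoc u v) ∂μ with hI
  have hJ : ∀ u : Fin m → G, Integrable (fun v => ρ (Fin.snoc u v)) μ := fun u =>
    (hρ.comp (continuous_snoc_right u)).integrable_of_compact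
  set B : V := σ (t 0) (I fun i => t i.succ)
    + ∑ j : Fin (m + 1), ((-1 : ℝ) ^ (j.val + 1)) • I (Fin.contractNth j (· * ·) t) with hB
  have havg : ∀ u : Fin m → G, avg μ m ρ u = ((-1 : ℝ) ^ (m + 1)) • I u := fun u => rfl
  have hL : coboundary σ m (avg μ m ρ) t = ((-1 : ℝ) ^ (m + 1)) • B := by
    rw [coboundary_apply, hB, smul_add]
    congr 1
    · rw [havg]
      exact _root_.map_smul (σ (t 0)) _ _
    · rw [Finset.smul_sum]
      refine Finset.sum_congr rfl fun j _ => ?_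
      rw [havg, smul_comm]
  have hpt : ∀ v : G, coboundary σ (m + 1) ρ (Fin.snoc t v)
      = σ (t 0) (ρ (Fin.snoc (fun i : Fin m => t i.succ) v))
        + (∑ i : Fin m, ((-1 : ℝ) ^ (i.val + 1)) •
            ρ (Fin.snoc (Fin.contractNth i.castSucc (· * ·) t) v)
          + ((-1 : ℝ) ^ (m + 1)) •
            ρ (Fin.snoc (fun k : Fin m => t k.castSucc) (t (Fin.last m) * v)))
        + ((-1 : ℝ) ^ (m + 1 + 1)) • ρ t := by
    intro v
    rw [coboundary_apply, snoc_zero', snoc_comp_succ, Fin.sum_univ_castSucc,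
      Fin.sum_univ_castSucc, contract_snoc_top, contract_snoc_last]
    simp only [contract_snoc_castSucc, Fin.coe_castSucc, Fin.val_last]
    rw [← add_assoc]
  have hI1 : Integrable (fun v => σ (t 0) (ρ (Fin.snoc (fun i : Fin m => t i.succ) v))) μ :=
    (((σ (t 0)).continuous).comp
      (hρ.comp (continuous_snoc_right _))).integrable_of_compact
  have hI2 : Integrable (fun v => ∑ i : Fin m, ((-1 : ℝ) ^ (i.val + 1)) •
      ρ (Fin.snoc (Fin.contractNth i.castSucc (· * ·) t) v)) μ :=
    integrable_finset_sum _ fun i _ => (hJ _).smul _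
  have hc3 : Continuous fun v : G =>
      ρ (Fin.snoc (fun k : Fin m => t k.castSucc) (t (Fin.last m) * v)) := by
    apply hρ.comp
    apply (continuous_snoc_right (fun k : Fin m => t k.castSucc)).comp
    exact continuous_mul_left _
  have hI3 : Integrable (fun v => ((-1 : ℝ) ^ (m + 1)) •
      ρ (Fin.snoc (fun k : Fin m => t k.castSucc) (t (Fin.last m) * v))) μ :=
    (hc3.integrable_of_compact).smul _
  have hint : ∫ v, coboundary σ (m + 1) ρ (Fin.snoc t v) ∂μ
      = σ (t 0) (I fun i => t i.succ)
        + (∑ i : Fin m, ((-1 : ℝ) ^ (i.val + 1)) • I (Fin.contractNth i.castSucc (· * ·) t)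
          + ((-1 : ℝ) ^ (m + 1)) • I (fun k : Fin m => t k.castSucc))
        + ((-1 : ℝ) ^ (m + 1 + 1)) • ρ t := by
    have hI23 : Integrable (fun v => ∑ i : Fin m, ((-1 : ℝ) ^ (i.val + 1)) •
        ρ (Fin.snoc (Fin.contractNth i.castSucc (· * ·) t) v)
        + ((-1 : ℝ) ^ (m + 1)) •
          ρ (Fin.snoc (fun k : Fin m => t k.castSucc) (t (Fin.last m) * v))) μ :=
      hI2.add hI3
    have hI123 : Integrable (fun v => σ (t 0) (ρ (Fin.snoc (fun i : Fin m => t i.succ) v))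
        + (∑ i : Fin m, ((-1 : ℝ) ^ (i.val + 1)) •
            ρ (Fin.snoc (Fin.contractNth i.castSucc (· * ·) t) v)
          + ((-1 : ℝ) ^ (m + 1)) •
            ρ (Fin.snoc (fun k : Fin m => t k.castSucc) (t (Fin.last m) * v)))) μ :=
      hI1.add hI23
    rw [integral_congr_ae (Filter.Eventually.of_forall hpt)]
    rw [integral_add hI123 (integrable_const _), integral_add hI1 hI23,
      integral_add hI2 hI3]
    congr 1
    congr 1
    · exact LinearIsometry.integral_comp_comm (σ (t 0)).toLinearIsometry
        (fun v => ρ (Fin.snoc (fun i : Fin m => t i.succ) v))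
    · congr 1
      · rw [integral_finset_sum (μ := μ)
          (f := fun (i : Fin m) (v : G) => ((-1 : ℝ) ^ (i.val + 1)) •
            ρ (Fin.snoc (Fin.contractNth i.castSucc (· * ·) t) v))
          Finset.univ (fun i _ => (hJ _).smul _)]
        exact Finset.sum_congr rfl fun i _ => integral_smul _ _
      · rw [integral_smul]
        congr 1
        exact integral_mul_left_eq_self
          (fun v => ρ (Fin.snoc (fun k : Fin m => t k.castSucc) v)) (t (Fin.last m))
    · rw [integral_smul, integral_const, probReal_univ, one_smul]
  have havg2 : avg μ (m + 1) (coboundary σ (m + 1) ρ) t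
      = ((-1 : ℝ) ^ (m + 1 + 1)) • (B + ((-1 : ℝ) ^ (m + 1 + 1)) • ρ t) := by
    show ((-1 : ℝ) ^ (m + 1 + 1)) • ∫ v, coboundary σ (m + 1) ρ (Fin.snoc t v) ∂μ = _
    rw [hint, hB, Fin.sum_univ_castSucc, contract_last]
    simp only [Fin.coe_castSucc, Fin.val_last]
  have h2 : ((-1 : ℝ) ^ (m + 1 + 1)) • (B + ((-1 : ℝ) ^ (m + 1 + 1)) • ρ t)
      = -(((-1 : ℝ) ^ (m + 1)) • B) + ρ t := by
    rw [smul_add, smul_smul, ← pow_add]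
    have he : ((-1 : ℝ) ^ (m + 1 + 1 + (m + 1 + 1))) = 1 :=
      Even.neg_one_pow ⟨m + 2, by ring⟩
    rw [he, one_smul, pow_succ (-1 : ℝ) (m + 1), mul_neg_one, neg_smul]
  rw [hL, havg2, h2]
  abel

end Key

/-- (Abelian stability theorem.) For a compact group `G` with Haar
probability measure acting continuously by linear isometries on a real Banach space `V`,
and a continuous `n`-cochain `ρ` (`n = m + 1 ≥ 1`), the cochain `ρ' := δ(hρ)` is a
continuous `n`-cocycle, is the coboundary of a continuous `(n-1)`-cochain, and satisfies
`sup ‖ρ' - ρ‖ ≤ sup ‖δρ‖`. -/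
theorem almost_cocycles_near_cocycles {G : Type*} [Group G] [TopologicalSpace G]
    [IsTopologicalGroup G] [CompactSpace G] [MeasurableSpace G] [BorelSpace G]
    (μ : Measure G) [μ.IsHaarMeasure] [IsProbabilityMeasure μ]
    {V : Type*} [NormedAddCommGroup V] [NormedSpace ℝ V] [CompleteSpace V]
    (σ : G →* (V ≃ₗᵢ[ℝ] V)) (hσ : Continuous fun p : G × V => σ p.1 p.2)
    (m : ℕ) (ρ : (Fin (m + 1) → G) → V) (hρ : Continuous ρ)
    (ρ' : (Fin (m + 1) → G) → V) (hρ' : ρ' = coboundary σ m (avg μ m ρ)) :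
    Continuous ρ' ∧
      coboundary σ (m + 1) ρ' = 0 ∧
      (∃ α : (Fin m → G) → V, Continuous α ∧ ρ' = coboundary σ m α) ∧
      (⨆ x : Fin (m + 1) → G, ‖ρ' x - ρ x‖) ≤
        ⨆ y : Fin (m + 2) → G, ‖coboundary σ (m + 1) ρ y‖ := by
  subst hρ'
  refine ⟨coboundary_continuous σ hσ (avg_continuous μ hρ),
    coboundary_coboundary σ m (avg μ m ρ),
    ⟨avg μ m ρ, avg_continuous μ hρ, rfl⟩, ?_⟩
  have hδcont : Continuous (coboundary σ (m + 1) ρ) := coboundary_continuous σ hσ hρ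
  have hbdd : BddAbove (Set.range fun y : Fin (m + 2) → G => ‖coboundary σ (m + 1) ρ y‖) :=
    (isCompact_range hδcont.norm).bddAbove
  refine ciSup_le fun x => ?_
  have hkey := key_identity μ σ m ρ hρ x
  have hdiff : coboundary σ m (avg μ m ρ) x - ρ x
      = -(avg μ (m + 1) (coboundary σ (m + 1) ρ) x) := by
    rw [hkey]; abel
  rw [hdiff, norm_neg]
  show ‖((-1 : ℝ) ^ (m + 1 + 1)) • ∫ v, coboundary σ (m + 1) ρ (Fin.snoc x v) ∂μ‖ ≤ _
  rw [norm_smul]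
  have habs : ‖((-1 : ℝ) ^ (m + 1 + 1))‖ = 1 := by simp
  rw [habs, one_mul]
  have hle : ‖∫ v, coboundary σ (m + 1) ρ (Fin.snoc x v) ∂μ‖
      ≤ (⨆ y : Fin (m + 2) → G, ‖coboundary σ (m + 1) ρ y‖) * (μ Set.univ).toReal :=
    norm_integral_le_of_norm_le_const (Filter.Eventually.of_forall fun v =>
      le_ciSup hbdd (Fin.snoc x v))
  rwa [measure_univ, ENNReal.toReal_one, mul_one] at hle
end

section
/- Let G be a compact topological group, and let V be a real Banach space on which G acts continuously by linear isometries. Let n ≥ 1 and let ρ : Gⁿ → V be a continuous n-cocycle, i.e. δρ = 0 where δρ(s₀, …, sₙ) := s₀ • ρ(s₁, …, sₙ) + Σ_{i=1}^{n} (−1)^i ρ(s₀, …, s_{i−1} s_i, …, sₙ) + (−1)^{n+1} ρ(s₀, …, s_{n−1}). Then there exists a continuous map α : Gⁿ⁻¹ → V with ρ = δα (where for n = 1, α is a constant x ∈ V and δx(s) = s • x − x). In other words, the continuous group cohomology Hⁿ(G; V) vanishes for n ≥ 1. -/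
open MeasureTheory

lemma aux_integrable {X : Type*} [TopologicalSpace X] [CompactSpace X] [MeasurableSpace X]
    [OpensMeasurableSpace X] {E : Type*} [NormedAddCommGroup E]
    (μ : Measure X) [IsFiniteMeasure μ] {f : X → E} (hf : Continuous f) :
    Integrable f μ := by
  borelize E
  have hsm : StronglyMeasurable f :=
    stronglyMeasurable_iff_measurable_separable.2
      ⟨hf.measurable, (isCompact_range hf).isSeparable⟩
  obtain ⟨C, hC⟩ := (isCompact_range (hf.norm)).bddAbove
  refine ⟨hsm.aestronglyMeasurable, ?_⟩
  exact HasFiniteIntegral.of_bounded (C := C)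
    (Filter.Eventually.of_forall fun x => hC (Set.mem_range_self x))

lemma aux_snoc_cont {G : Type*} [TopologicalSpace G] {m : ℕ} :
    Continuous (fun p : G × (Fin m → G) => (Fin.snoc p.2 p.1 : Fin (m+1) → G)) := by
  apply continuous_pi
  intro i
  induction i using Fin.lastCases with
  | last => simpa [Fin.snoc_last] using continuous_fst
  | cast k => simp only [Fin.snoc_castSucc]; exact (continuous_apply k).comp continuous_snd


/-- For a compact group `G` acting continuously by linear isometries on a
real Banach space `V`, every continuous `n`-cocycle (`n = m + 1 ≥ 1`) is the coboundary of
a continuous `(n-1)`-cochain: the continuous group cohomology `Hⁿ(G; V)` vanishes for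
`n ≥ 1`. -/
theorem continuous_cohomology_vanishes {G : Type*} [Group G] [TopologicalSpace G]
    [IsTopologicalGroup G] [CompactSpace G]
    {V : Type*} [NormedAddCommGroup V] [NormedSpace ℝ V] [CompleteSpace V]
    (σ : G →* (V ≃ₗᵢ[ℝ] V)) (hσ : Continuous fun p : G × V => σ p.1 p.2)
    (m : ℕ) (ρ : (Fin (m + 1) → G) → V) (hρ : Continuous ρ)
    (hcoc : coboundary σ (m + 1) ρ = 0) :
    ∃ α : (Fin m → G) → V, Continuous α ∧ ρ = coboundary σ m α := by
  classical
  borelize G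
  haveI : Nonempty G := ⟨1⟩
  set μ : Measure G := Measure.haarMeasure ⊤ with hμ
  haveI : IsProbabilityMeasure μ := ⟨by
    rw [← TopologicalSpace.PositiveCompacts.coe_top (α := G)]
    exact Measure.haarMeasure_self⟩
  -- the continuous-map-valued integrand
  set F : C(G, C(Fin m → G, V)) :=
    ContinuousMap.curry ⟨fun p : G × (Fin m → G) => ρ (Fin.snoc p.2 p.1),
      hρ.comp aux_snoc_cont⟩ with hF
  have hFint : Integrable (fun t => F t) μ := aux_integrable μ F.continuous
  set I : C(Fin m → G, V) := ∫ t, F t ∂μ with hIdef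
  set J : (Fin m → G) → V := fun u => ∫ t, ρ (Fin.snoc u t : Fin (m+1) → G) ∂μ with hJ
  have hI : ∀ u, I u = J u := fun u => by
    exact ContinuousMap.integral_apply hFint u
  set c : ℝ := (-1 : ℝ) ^ (m + 1) with hc
  refine ⟨fun u => c • I u, (I.continuous.const_smul c), ?_⟩
  -- integrability of slices
  have hsnoc : ∀ u : Fin m → G, Continuous fun t : G => (Fin.snoc u t : Fin (m+1) → G) :=
    fun u => aux_snoc_cont.comp (Continuous.prodMk_left u) |>.congr (fun t => rfl)
  have hint : ∀ u : Fin m → G, Integrable (fun t => ρ (Fin.snoc u t : Fin (m+1) → G)) μ :=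
    fun u => aux_integrable μ (hρ.comp (hsnoc u))
  funext s
  -- the pointwise cocycle identity specialized to (snoc s t)
  have hpt : ∀ t : G,
      σ (s 0) (ρ ((Fin.snoc (fun i : Fin m => s i.succ) t : Fin (m+1) → G)))
      + ((∑ i : Fin m, ((-1 : ℝ) ^ (i.val + 1)) •
          ρ ((Fin.snoc (fun j : Fin m =>
              if j.val < i.val then s j.castSucc
              else if j.val = i.val then s j.castSucc * s j.succ
              else s j.succ) t : Fin (m+1) → G)))
        + ((-1 : ℝ) ^ (m + 1)) • ρ ((Fin.snoc (fun j : Fin m => s j.castSucc) (s (Fin.last m) * t) : Fin (m+1) → G)))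
      + ((-1 : ℝ) ^ m) • ρ s = 0 := by
    intro t
    have h0 := congrFun hcoc (Fin.snoc s t)
    simp only [coboundary, Pi.zero_apply] at h0
    rw [Fin.sum_univ_castSucc] at h0
    -- identify each piece
    have e0 : (Fin.snoc s t : Fin (m+2) → G) 0 = s 0 := by
      rw [show (0 : Fin (m+2)) = Fin.castSucc 0 by simp]
      rw [Fin.snoc_castSucc]
    have e1 : (fun i : Fin (m+1) => (Fin.snoc s t : Fin (m+2) → G) i.succ)
        = (Fin.snoc (fun i : Fin m => s i.succ) t : Fin (m+1) → G) := by
      funext i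
      induction i using Fin.lastCases with
      | last => rw [Fin.succ_last, Fin.snoc_last, Fin.snoc_last]
      | cast k => rw [Fin.succ_castSucc, Fin.snoc_castSucc, Fin.snoc_castSucc]
    have e2 : ∀ i : Fin m,
        (fun j : Fin (m+1) =>
          if j.val < (Fin.castSucc i).val then (Fin.snoc s t : Fin (m+2) → G) j.castSucc
          else if j.val = (Fin.castSucc i).val then
            (Fin.snoc s t : Fin (m+2) → G) j.castSucc * (Fin.snoc s t : Fin (m+2) → G) j.succ
          else (Fin.snoc s t : Fin (m+2) → G) j.succ)
        = (Fin.snoc (fun j : Fin m =>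
              if j.val < i.val then s j.castSucc
              else if j.val = i.val then s j.castSucc * s j.succ
              else s j.succ) t : Fin (m+1) → G) := by
      intro i
      have hi := i.isLt
      funext j
      induction j using Fin.lastCases with
      | last =>
        simp only [Fin.snoc_last, Fin.succ_last, Fin.coe_castSucc, Fin.val_last] <;> (try split_ifs) <;>
          first | rfl | (exfalso; omega)
      | cast k =>
        have hk := k.isLt
        simp only [Fin.snoc_castSucc, Fin.succ_castSucc, Fin.coe_castSucc, Fin.val_last] <;> (try split_ifs) <;>
          first | rfl | (exfalso; omega)
    have e3 : (fun j : Fin (m+1) =>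
          if j.val < (Fin.last m).val then (Fin.snoc s t : Fin (m+2) → G) j.castSucc
          else if j.val = (Fin.last m).val then
            (Fin.snoc s t : Fin (m+2) → G) j.castSucc * (Fin.snoc s t : Fin (m+2) → G) j.succ
          else (Fin.snoc s t : Fin (m+2) → G) j.succ)
        = (Fin.snoc (fun j : Fin m => s j.castSucc) (s (Fin.last m) * t) : Fin (m+1) → G) := by
      funext j
      induction j using Fin.lastCases with
      | last =>
        simp only [Fin.snoc_last, Fin.snoc_castSucc, Fin.succ_last, Fin.coe_castSucc, Fin.val_last] <;> (try split_ifs) <;>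
          first | rfl | (exfalso; omega)
      | cast k =>
        have hk := k.isLt
        simp only [Fin.snoc_castSucc, Fin.succ_castSucc, Fin.coe_castSucc, Fin.val_last] <;> (try split_ifs) <;>
          first | rfl | (exfalso; omega)
    have e4 : (fun j : Fin (m+1) => (Fin.snoc s t : Fin (m+2) → G) j.castSucc) = s := by
      funext j; rw [Fin.snoc_castSucc]
    rw [e0, e1, e4] at h0
    rw [show ∀ f : Fin m → V, (∑ i : Fin m, f i) = ∑ i : Fin m, f i from fun _ => rfl] at h0
    -- rewrite summand tuples
    have e2' : (∑ i : Fin m, ((-1 : ℝ) ^ ((Fin.castSucc i).val + 1)) •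
        ρ (fun j : Fin (m+1) =>
          if j.val < (Fin.castSucc i).val then (Fin.snoc s t : Fin (m+2) → G) j.castSucc
          else if j.val = (Fin.castSucc i).val then
            (Fin.snoc s t : Fin (m+2) → G) j.castSucc * (Fin.snoc s t : Fin (m+2) → G) j.succ
          else (Fin.snoc s t : Fin (m+2) → G) j.succ))
        = ∑ i : Fin m, ((-1 : ℝ) ^ (i.val + 1)) •
          ρ ((Fin.snoc (fun j : Fin m =>
              if j.val < i.val then s j.castSucc
              else if j.val = i.val then s j.castSucc * s j.succ
              else s j.succ) t : Fin (m+1) → G)) := by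
      refine Finset.sum_congr rfl fun i _ => ?_
      rw [e2 i, Fin.coe_castSucc]
    rw [e2', e3] at h0
    simp only [Fin.val_last] at h0
    rw [show ((-1:ℝ)^(m+1+1)) = (-1:ℝ)^m by ring] at h0
    exact h0
  -- integrate the pointwise identity
  set A : G → V := fun t => σ (s 0) (ρ (Fin.snoc (fun i : Fin m => s i.succ) t)) with hA
  set B : G → V := fun t => ∑ i : Fin m, ((-1 : ℝ) ^ (i.val + 1)) •
      ρ (Fin.snoc (fun j : Fin m =>
          if j.val < i.val then s j.castSucc
          else if j.val = i.val then s j.castSucc * s j.succ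
          else s j.succ) t : Fin (m+1) → G) with hB
  set C : G → V := fun t =>
      ((-1 : ℝ) ^ (m + 1)) •
        ρ (Fin.snoc (fun j : Fin m => s j.castSucc) (s (Fin.last m) * t) : Fin (m+1) → G)
    with hC
  have hAi : Integrable A μ :=
    aux_integrable μ ((σ (s 0)).continuous.comp (hρ.comp (hsnoc _)))
  have hBi : Integrable B μ := by
    apply aux_integrable μ
    exact continuous_finset_sum _ fun i _ => (hρ.comp (hsnoc _)).const_smul _
  have hCi : Integrable C μ := by
    apply aux_integrable μ
    have hCc : Continuous fun t : G =>
        ρ (Fin.snoc (fun j : Fin m => s j.castSucc) (s (Fin.last m) * t) : Fin (m+1) → G) := by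
      apply Continuous.comp hρ
      apply Continuous.comp (hsnoc (fun j : Fin m => s j.castSucc)) (continuous_mul_left _)
    exact hCc.const_smul _
  have h2 : ∫ t, (A t + B t + C t + ((-1 : ℝ) ^ m) • ρ s) ∂μ = 0 := by
    have : (fun t => A t + B t + C t + ((-1 : ℝ) ^ m) • ρ s) = fun _ => (0 : V) := by
      funext t
      have := hpt t
      rw [hA, hB, hC]
      calc A t + B t + C t + ((-1 : ℝ) ^ m) • ρ s
          = A t + (B t + C t) + ((-1 : ℝ) ^ m) • ρ s := by abel
        _ = 0 := hpt t
    rw [this, integral_zero]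
  have hABi : Integrable (fun t => A t + B t) μ := hAi.add hBi
  have hABCi : Integrable (fun t => A t + B t + C t) μ := hABi.add hCi
  rw [integral_add hABCi (integrable_const _),
    integral_add hABi hCi, integral_add hAi hBi, integral_const] at h2
  have hAeq : ∫ t, A t ∂μ = σ (s 0) (J fun i => s i.succ) := by
    rw [hA, hJ]
    exact ContinuousLinearMap.integral_comp_comm
      ((σ (s 0)).toLinearIsometry.toContinuousLinearMap) (hint _)
  have hBeq : ∫ t, B t ∂μ = ∑ i : Fin m, ((-1 : ℝ) ^ (i.val + 1)) •
      J (fun j : Fin m =>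
          if j.val < i.val then s j.castSucc
          else if j.val = i.val then s j.castSucc * s j.succ
          else s j.succ) := by
    rw [hB, integral_finset_sum (μ := μ)
      (f := fun (i : Fin m) (t : G) => ((-1 : ℝ) ^ (i.val + 1)) •
        ρ (Fin.snoc (fun j : Fin m =>
            if j.val < i.val then s j.castSucc
            else if j.val = i.val then s j.castSucc * s j.succ
            else s j.succ) t : Fin (m+1) → G))
      Finset.univ (fun i _ => by exact (hint _).smul _)]
    exact Finset.sum_congr rfl fun i _ => by rw [integral_smul, hJ]
  have hCeq : ∫ t, C t ∂μ = ((-1 : ℝ) ^ (m + 1)) • J (fun j : Fin m => s j.castSucc) := by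
    rw [hC, integral_smul, hJ]
    congr 1
    exact integral_mul_left_eq_self
      (fun t => ρ (Fin.snoc (fun j : Fin m => s j.castSucc) t : Fin (m+1) → G)) (s (Fin.last m))
  rw [hAeq, hBeq, hCeq] at h2
  simp only [measure_univ, ENNReal.toReal_one, probReal_univ, one_smul] at h2
  have keyX : σ (s 0) (J fun i => s i.succ)
      + (∑ i : Fin m, ((-1 : ℝ) ^ (i.val + 1)) •
          J (fun j : Fin m =>
            if j.val < i.val then s j.castSucc
            else if j.val = i.val then s j.castSucc * s j.succ
            else s j.succ))
      + ((-1 : ℝ) ^ (m + 1)) • J (fun j : Fin m => s j.castSucc)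
      = ((-1 : ℝ) ^ (m + 1)) • ρ s := by
    have := eq_neg_of_add_eq_zero_left h2
    rw [this, ← neg_smul]
    congr 1
    ring
  have hc1 : c * ((-1 : ℝ) ^ (m + 1)) = 1 := by
    rw [hc, ← pow_add]
    exact Even.neg_one_pow ⟨m + 1, by ring⟩
  calc ρ s = c • (((-1 : ℝ) ^ (m + 1)) • ρ s) := by rw [smul_smul, hc1, one_smul]
    _ = c • (σ (s 0) (J fun i => s i.succ)
      + (∑ i : Fin m, ((-1 : ℝ) ^ (i.val + 1)) •
          J (fun j : Fin m =>
            if j.val < i.val then s j.castSucc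
            else if j.val = i.val then s j.castSucc * s j.succ
            else s j.succ))
      + ((-1 : ℝ) ^ (m + 1)) • J (fun j : Fin m => s j.castSucc)) := by rw [keyX]
    _ = coboundary σ m (fun u => c • I u) s := by
      simp only [coboundary, hI, _root_.map_smul, smul_add, Finset.smul_sum, smul_smul]
      ring_nf
end

section
/- Let G be a compact topological group acting on a real unital Banach algebra A by isometric unital algebra automorphisms, with the action map G × A → A, (s, a) ↦ s • a, jointly continuous; this induces an action of G on the group Aˣ of invertible elements. For every M ≥ 1 and every δ > 0 there exists ε > 0 with the following property: for every continuous map ρ : G → Aˣ satisfying ‖ρ(s)‖ ≤ M and ‖ρ(s)⁻¹‖ ≤ M for all s ∈ G and sup_{s,t ∈ G} ‖ρ(s) · (s • ρ(t)) − ρ(st)‖ ≤ ε, there exists a continuous map ρ' : G → Aˣ that is a 1-cocycle, i.e. ρ'(st) = ρ'(s) · (s • ρ'(t)) for all s, t ∈ G, and satisfies sup_{s ∈ G} ‖ρ'(s) − ρ(s)‖ ≤ δ. -/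
open MeasureTheory Topology

set_option linter.unusedSectionVars false
set_option maxHeartbeats 1000000

section Helpers

variable {G : Type*} [Group G] [TopologicalSpace G] [IsTopologicalGroup G] [CompactSpace G]
variable {A : Type*} [NormedRing A] [NormOneClass A] [CompleteSpace A] [NormedAlgebra ℝ A]
variable [MeasurableSpace G] [BorelSpace G]
variable (μ : Measure G) [IsProbabilityMeasure μ] [μ.IsMulLeftInvariant]

theorem aux_integrable_s7 {g : G → A} (hg : Continuous g) : Integrable g μ := by
  borelize A
  obtain ⟨C, hC⟩ := (isCompact_range hg.norm).bddAbove
  refine Integrable.mono' (integrable_const C) ?_ (Filter.Eventually.of_forall fun x => hC ⟨x, rfl⟩)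
  refine (stronglyMeasurable_iff_measurable_separable.2 ⟨hg.measurable, ?_⟩).aestronglyMeasurable
  exact (isCompact_range hg).isSeparable

theorem aux_cont_integral {F : G × G → A} (hF : Continuous F) :
    Continuous fun s => ∫ t, F (s, t) ∂μ := by
  have hli : LipschitzWith 1 (fun g : C(G, A) => ∫ t, g t ∂μ) := by
    refine LipschitzWith.of_dist_le_mul fun g h => ?_
    simp only [NNReal.coe_one, one_mul]
    rw [dist_eq_norm, ← integral_sub (aux_integrable_s7 μ g.continuous)
      (aux_integrable_s7 μ h.continuous)]
    calc ‖∫ t, (g t - h t) ∂μ‖ ≤ dist g h * (μ Set.univ).toReal := by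
          refine norm_integral_le_of_norm_le_const (Filter.Eventually.of_forall fun t => ?_)
          rw [← dist_eq_norm]
          exact ContinuousMap.dist_apply_le_dist t
      _ = dist g h := by simp
  exact hli.continuous.comp (ContinuousMap.mk F hF).curry.continuous

theorem aux_step (σ : G →* (A ≃ₐ[ℝ] A)) (hiso : ∀ s : G, Isometry (σ s))
    (hσ : Continuous fun p : G × A => σ p.1 p.2)
    (μ : Measure G) [IsProbabilityMeasure μ] [μ.IsMulLeftInvariant]
    (B e : ℝ) (hB : 1 ≤ B) (he : 0 ≤ e) (heB : e * (B * B) ≤ 1 / 2)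
    (ρ : G → Aˣ) (hc : Continuous fun s => (ρ s : A))
    (hb : ∀ s : G, ‖(ρ s : A)‖ ≤ B) (hbi : ∀ s : G, ‖(((ρ s)⁻¹ : Aˣ) : A)‖ ≤ B)
    (hd : ∀ s t : G, ‖(ρ s : A) * σ s (ρ t : A) - (ρ (s * t) : A)‖ ≤ e) :
    ∃ g : G → Aˣ, Continuous (fun s => (g s : A)) ∧
      (∀ s : G, ‖(g s : A) - (ρ s : A)‖ ≤ e * B) ∧
      (∀ s : G, ‖(g s : A)‖ ≤ B + e * B) ∧
      (∀ s : G, ‖(((g s)⁻¹ : Aˣ) : A)‖ ≤ B * (1 + 2 * (e * (B * B)))) ∧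
      (∀ s t : G, ‖(g s : A) * σ s (g t : A) - (g (s * t) : A)‖ ≤ 2 * (e * B) * (e * B)) := by
  classical
  set v : G → A := fun s => (ρ s : A) with hv
  set w : G → A := fun s => (((ρ s)⁻¹ : Aˣ) : A) with hwdef
  have hB0 : (0:ℝ) < B := lt_of_lt_of_le one_pos hB
  have hn : ∀ (s : G) (a : A), ‖σ s a‖ = ‖a‖ := fun s a =>
    (hiso s).norm_map_of_map_zero (map_zero _) a
  have hmul2 : ∀ (s t : G) (a : A), σ s (σ t a) = σ (s * t) a := by
    intro s t a; rw [map_mul σ]; rfl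
  have hw : Continuous w := by
    have h1 : Continuous fun s => Ring.inverse (v s) :=
      continuous_iff_continuousAt.2 fun s =>
        ContinuousAt.comp (f := v) (NormedRing.inverse_continuousAt (ρ s)) hc.continuousAt
    simpa only [hv, Ring.inverse_unit] using h1
  -- the averaged map
  set f : G → A := fun s => ∫ u, v (s * u) * σ s (w u) ∂μ with hf
  have hFc : Continuous fun p : G × G => v (p.1 * p.2) * σ p.1 (w p.2) := by
    have h1 : Continuous fun p : G × G => v (p.1 * p.2) :=
      hc.comp (continuous_fst.mul continuous_snd)
    have h2 : Continuous fun p : G × G => σ p.1 (w p.2) :=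
      hσ.comp (continuous_fst.prodMk (hw.comp continuous_snd))
    exact h1.mul h2
  have hfc : Continuous f := aux_cont_integral μ hFc
  have hint : ∀ s : G, Integrable (fun u => v (s * u) * σ s (w u)) μ := fun s =>
    aux_integrable_s7 μ (hFc.comp (Continuous.prodMk_right s))
  -- pointwise identity used twice
  have haux : ∀ a x : G, v a - v (a * x) * σ a (w x) = (v a * σ a (v x) - v (a * x)) * σ a (w x) := by
    intro a x
    rw [sub_mul, mul_assoc, ← map_mul, Units.mul_inv, map_one, mul_one]
  have hauxn : ∀ a x : G, ‖v a - v (a * x) * σ a (w x)‖ ≤ e * B := by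
    intro a x
    rw [haux a x]
    calc ‖(v a * σ a (v x) - v (a * x)) * σ a (w x)‖
        ≤ ‖v a * σ a (v x) - v (a * x)‖ * ‖σ a (w x)‖ := norm_mul_le _ _
      _ ≤ e * B := by
          rw [hn]
          exact mul_le_mul (hd a x) (hbi x) (norm_nonneg _) he
  have hfv : ∀ s : G, ‖f s - v s‖ ≤ e * B := by
    intro s
    have h1 : f s - v s = ∫ u, (v (s * u) * σ s (w u) - v s) ∂μ := by
      rw [integral_sub (hint s) (integrable_const _), integral_const]
      simp [measure_univ]
      rfl
    rw [h1]
    have h2 : ‖∫ u, (v (s * u) * σ s (w u) - v s) ∂μ‖ ≤ (e * B) * (μ Set.univ).toReal := by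
      refine norm_integral_le_of_norm_le_const (Filter.Eventually.of_forall fun u => ?_)
      rw [norm_sub_rev]
      exact hauxn s u
    simpa [measure_univ] using h2
  -- construction of the unit-valued g with values f
  have hxlt : ∀ s : G, ‖-((f s - v s) * w s)‖ < 1 := by
    intro s
    rw [norm_neg]
    calc ‖(f s - v s) * w s‖ ≤ ‖f s - v s‖ * ‖w s‖ := norm_mul_le _ _
      _ ≤ (e * B) * B := mul_le_mul (hfv s) (hbi s) (norm_nonneg _)
            (by positivity)
      _ ≤ 1 / 2 := by rw [← mul_assoc] at heB; exact heB
      _ < 1 := by norm_num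
  set g : G → Aˣ := fun s => Units.oneSub (-((f s - v s) * w s)) (hxlt s) * ρ s with hg
  have hgval : ∀ s : G, (g s : A) = f s := by
    intro s
    show (1 - -((f s - v s) * w s)) * v s = f s
    rw [sub_neg_eq_add, add_mul, one_mul, mul_assoc]
    rw [show w s * v s = 1 from Units.inv_mul (ρ s), mul_one]
    abel
  refine ⟨g, ?_, ?_, ?_, ?_, ?_⟩
  · simpa only [funext hgval] using hfc
  · intro s; rw [hgval s]; exact hfv s
  · intro s
    rw [hgval s]
    calc ‖f s‖ ≤ ‖v s‖ + ‖f s - v s‖ := by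
          simpa using norm_add_le (v s) (f s - v s)
      _ ≤ B + e * B := add_le_add (hb s) (hfv s)
  · intro s
    have hy : ‖(((Units.oneSub (-((f s - v s) * w s)) (hxlt s))⁻¹ : Aˣ) : A)‖
        ≤ 1 + 2 * (e * (B * B)) := by
      set x := -((f s - v s) * w s) with hxd
      set y : A := (((Units.oneSub x (hxlt s))⁻¹ : Aˣ) : A) with hyd
      have hxb : ‖x‖ ≤ e * (B * B) := by
        rw [hxd, norm_neg, ← mul_assoc]
        calc ‖(f s - v s) * w s‖ ≤ ‖f s - v s‖ * ‖w s‖ := norm_mul_le _ _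
          _ ≤ (e * B) * B := mul_le_mul (hfv s) (hbi s) (norm_nonneg _) (by positivity)
      have hiv : y * (1 - x) = 1 := by
        rw [hyd, ← Units.val_oneSub x (hxlt s), Units.inv_mul]
      have hyx : y = 1 + y * x := by
        have := hiv
        rw [mul_sub, mul_one] at this
        have h2 : y - y * x + y * x = 1 + y * x := by rw [this]
        calc y = y - y * x + y * x := by abel
          _ = 1 + y * x := h2
      have hyb : ‖y‖ ≤ 1 + ‖y‖ * ‖x‖ := by
        calc ‖y‖ = ‖1 + y * x‖ := by rw [← hyx]
          _ ≤ ‖(1:A)‖ + ‖y * x‖ := norm_add_le _ _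
          _ ≤ 1 + ‖y‖ * ‖x‖ := by
              rw [norm_one]
              exact add_le_add (le_refl 1) (norm_mul_le _ _)
      have hx2 : ‖x‖ ≤ 1 / 2 := le_trans hxb heB
      have hy2 : ‖y‖ ≤ 2 := by nlinarith [norm_nonneg y, norm_nonneg x]
      calc ‖y‖ ≤ 1 + ‖y‖ * ‖x‖ := hyb
        _ ≤ 1 + 2 * (e * (B * B)) := by nlinarith [norm_nonneg x]
    have hginv : (((g s)⁻¹ : Aˣ) : A)
        = w s * (((Units.oneSub (-((f s - v s) * w s)) (hxlt s))⁻¹ : Aˣ) : A) := by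
      simp only [hg]
      rw [mul_inv_rev, Units.val_mul]
    rw [hginv]
    calc ‖w s * (((Units.oneSub (-((f s - v s) * w s)) (hxlt s))⁻¹ : Aˣ) : A)‖
        ≤ ‖w s‖ * ‖(((Units.oneSub (-((f s - v s) * w s)) (hxlt s))⁻¹ : Aˣ) : A)‖ := norm_mul_le _ _
      _ ≤ B * (1 + 2 * (e * (B * B))) := mul_le_mul (hbi s) hy
          (norm_nonneg _) (le_of_lt hB0)
  · intro s t
    rw [hgval s, hgval t, hgval (s * t)]
    set c : A := σ s (v t) with hcdef
    set k : G → A := fun u => σ s (v (t * u) * σ t (w u)) with hkdef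
    set h : G → A := fun u => f s - v (s * (t * u)) * σ s (w (t * u)) with hhdef
    have hkc : Continuous k := (hiso s).continuous.comp (hFc.comp (Continuous.prodMk_right t))
    have hkint : Integrable k μ := aux_integrable_s7 μ hkc
    have hqc : Continuous fun u => v (s * (t * u)) * σ s (w (t * u)) :=
      (hFc.comp (Continuous.prodMk_right s)).comp (continuous_mul_left t)
    have hhc : Continuous h := continuous_const.sub hqc
    have hhint : Integrable h μ := aux_integrable_s7 μ hhc
    have E1 : σ s (f t) = ∫ u, k u ∂μ := by
      have h1 := ContinuousLinearMap.integral_comp_comm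
        (⟨(σ s).toLinearMap, (hiso s).continuous⟩ : A →L[ℝ] A) (hint t)
      exact h1.symm
    have E2 : f s * σ s (f t) = ∫ u, f s * k u ∂μ := by
      rw [E1]
      have h1 := ContinuousLinearMap.integral_comp_comm
        (ContinuousLinearMap.mul ℝ A (f s)) hkint
      simpa only [ContinuousLinearMap.mul_apply'] using h1.symm
    have E5 : ∀ u : G, f s * k u - v (s * t * u) * σ (s * t) (w u) = h u * k u := by
      intro u
      have hk1 : σ s (w (t * u)) * k u = σ (s * t) (w u) := by
        show σ s (w (t * u)) * σ s (v (t * u) * σ t (w u)) = _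
        rw [← map_mul, ← mul_assoc, show w (t * u) * v (t * u) = 1 from Units.inv_mul _,
          one_mul, hmul2]
      rw [mul_assoc s t u, ← hk1, ← mul_assoc (v (s * (t * u))), ← sub_mul]
    have E6 : (∫ u, h u ∂μ) = 0 := by
      have hq : (∫ u, v (s * (t * u)) * σ s (w (t * u)) ∂μ) = f s :=
        integral_mul_left_eq_self (μ := μ) (fun x => v (s * x) * σ s (w x)) t
      have : (∫ u, h u ∂μ) = (∫ _u, f s ∂μ) - ∫ u, v (s * (t * u)) * σ s (w (t * u)) ∂μ :=
        integral_sub (integrable_const _) (aux_integrable_s7 μ hqc)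
      rw [this, hq, integral_const]
      simp [measure_univ]
    have E7 : (∫ u, h u * c ∂μ) = 0 := by
      have h1 := ContinuousLinearMap.integral_comp_comm
        ((ContinuousLinearMap.mul ℝ A).flip c) hhint
      simp only [ContinuousLinearMap.flip_apply, ContinuousLinearMap.mul_apply'] at h1
      rw [h1, E6, zero_mul]
    have E8 : f s * σ s (f t) - f (s * t) = ∫ u, h u * (k u - c) ∂μ := by
      have hfst : f (s * t) = ∫ u, v (s * t * u) * σ (s * t) (w u) ∂μ := rfl
      have h1 : f s * σ s (f t) - f (s * t) = ∫ u, h u * k u ∂μ := by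
        rw [E2, hfst, ← integral_sub (aux_integrable_s7 μ (g := fun u => f s * k u) ((continuous_const.mul hkc)))
          (hint (s * t))]
        exact integral_congr_ae (Filter.Eventually.of_forall fun u => E5 u)
      have h2 : (∫ u, h u * (k u - c) ∂μ) = (∫ u, h u * k u ∂μ) - ∫ u, h u * c ∂μ := by
        rw [← integral_sub (aux_integrable_s7 μ (g := fun u => h u * k u) (hhc.mul hkc))
          (aux_integrable_s7 μ (g := fun u => h u * c) (hhc.mul continuous_const))]
        refine integral_congr_ae (Filter.Eventually.of_forall fun u => ?_)
        exact mul_sub (h u) (k u) c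
      rw [h1, h2, E7, sub_zero]
    rw [E8]
    have hh : ∀ u : G, ‖h u‖ ≤ 2 * (e * B) := by
      intro u
      have : h u = (f s - v s) + (v s - v (s * (t * u)) * σ s (w (t * u))) := by
        rw [hhdef]; abel
      rw [this, two_mul]
      exact le_trans (norm_add_le _ _) (add_le_add (hfv s) (hauxn s (t * u)))
    have hkcb : ∀ u : G, ‖k u - c‖ ≤ e * B := by
      intro u
      rw [hkdef, hcdef, ← map_sub, hn, norm_sub_rev]
      exact hauxn t u
    have h3 : ‖∫ u, h u * (k u - c) ∂μ‖ ≤ (2 * (e * B) * (e * B)) * (μ Set.univ).toReal := by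
      refine norm_integral_le_of_norm_le_const (Filter.Eventually.of_forall fun u => ?_)
      calc ‖h u * (k u - c)‖ ≤ ‖h u‖ * ‖k u - c‖ := norm_mul_le _ _
        _ ≤ 2 * (e * B) * (e * B) :=
            mul_le_mul (hh u) (hkcb u) (norm_nonneg _) (by positivity)
    simpa [measure_univ] using h3

end Helpers

/-- (n = 1 case of the main theorem for `U = Aˣ`.) Let the compact group
`G` act on a real unital Banach algebra `A` by isometric unital algebra automorphisms,
with jointly continuous action map. For every `M ≥ 1` and `δ > 0` there is `ε > 0` such
that every continuous `ρ : G → Aˣ` with `‖ρ s‖ ≤ M`, `‖(ρ s)⁻¹‖ ≤ M` and cocycle defect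
`‖ρ s * (s • ρ t) - ρ (s*t)‖ ≤ ε` is uniformly within `δ` of a continuous 1-cocycle
`ρ' : G → Aˣ`, i.e. `ρ' (s*t) = ρ' s * (s • ρ' t)`. -/
theorem almost_cocycle_near_cocycle_units {G : Type*} [Group G] [TopologicalSpace G]
    [IsTopologicalGroup G] [CompactSpace G]
    {A : Type*} [NormedRing A] [NormOneClass A] [CompleteSpace A] [NormedAlgebra ℝ A]
    (σ : G →* (A ≃ₐ[ℝ] A)) (hiso : ∀ s : G, Isometry (σ s))
    (hσ : Continuous fun p : G × A => σ p.1 p.2)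
    (M : ℝ) (hM : 1 ≤ M) (δ : ℝ) (hδ : 0 < δ) :
    ∃ ε > 0, ∀ ρ : G → Aˣ, Continuous ρ →
      (∀ s : G, ‖(ρ s : A)‖ ≤ M) → (∀ s : G, ‖(((ρ s)⁻¹ : Aˣ) : A)‖ ≤ M) →
      (∀ s t : G, ‖(ρ s : A) * σ s (ρ t : A) - (ρ (s * t) : A)‖ ≤ ε) →
      ∃ ρ' : G → Aˣ, Continuous ρ' ∧
        (∀ s t : G, (ρ' (s * t) : A) = (ρ' s : A) * σ s (ρ' t : A)) ∧
        ∀ s : G, ‖(ρ' s : A) - (ρ s : A)‖ ≤ δ := by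
  classical
  borelize G
  haveI : Nonempty G := ⟨1⟩
  set μ : Measure G := MeasureTheory.Measure.haarMeasure (⊤ : TopologicalSpace.PositiveCompacts G)
    with hμdef
  haveI : IsProbabilityMeasure μ := by
    constructor
    rw [show (Set.univ : Set G)
        = ((⊤ : TopologicalSpace.PositiveCompacts G) : Set G) from
      (TopologicalSpace.PositiveCompacts.coe_top).symm]
    exact MeasureTheory.Measure.haarMeasure_self
  have hM0 : (0:ℝ) < M := lt_of_lt_of_le one_pos hM
  set ε' : ℝ := min (δ / (4 * M)) (1 / (64 * M ^ 2)) with hε'def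
  have hε'pos : 0 < ε' := lt_min (by positivity) (by positivity)
  have hε1 : ε' ≤ δ / (4 * M) := min_le_left _ _
  have hε2 : ε' ≤ 1 / (64 * M ^ 2) := min_le_right _ _
  have h64 : ε' * (64 * M ^ 2) ≤ 1 := by
    rw [← le_div_iff₀ (by positivity)]; exact hε2
  refine ⟨ε', hε'pos, ?_⟩
  intro ρ hρ hbM hbMi hdef
  set P : ℕ → (G → Aˣ) → Prop := fun n τ =>
    Continuous (fun s => (τ s : A)) ∧
    (∀ s : G, ‖(τ s : A)‖ ≤ M * (2 - (1/2:ℝ) ^ n)) ∧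
    (∀ s : G, ‖(((τ s)⁻¹ : Aˣ) : A)‖ ≤ M * (2 - (1/2:ℝ) ^ n)) ∧
    (∀ s t : G, ‖(τ s : A) * σ s (τ t : A) - (τ (s * t) : A)‖ ≤ ε' * (1/2:ℝ) ^ n) with hPdef
  have base : P 0 ρ := by
    refine ⟨Units.continuous_val.comp hρ, ?_, ?_, ?_⟩
    · intro s; rw [pow_zero]; linarith [hbM s]
    · intro s; rw [pow_zero]; linarith [hbMi s]
    · intro s t; rw [pow_zero, mul_one]; exact hdef s t
  have step : ∀ n (τ : G → Aˣ), P n τ → ∃ τ' : G → Aˣ, P (n+1) τ' ∧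
      ∀ s : G, ‖(τ' s : A) - (τ s : A)‖ ≤ 2 * M * ε' * (1/2:ℝ) ^ n := by
    intro n τ hτ
    obtain ⟨h1, h2, h3, h4⟩ := hτ
    have ha0 : (0:ℝ) < (1/2:ℝ) ^ n := by positivity
    have ha1 : (1/2:ℝ) ^ n ≤ 1 := pow_le_one₀ (by norm_num) (by norm_num)
    have hM2 : 1 ≤ M ^ 2 := by nlinarith
    have hB1 : 1 ≤ M * (2 - (1/2:ℝ) ^ n) := by nlinarith
    have hBle : M * (2 - (1/2:ℝ) ^ n) ≤ 2 * M := by nlinarith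
    have he0 : 0 ≤ ε' * (1/2:ℝ) ^ n := by positivity
    have hB2 : (M * (2 - (1/2:ℝ) ^ n)) * (M * (2 - (1/2:ℝ) ^ n)) ≤ 4 * (M * M) := by
      nlinarith [mul_le_mul hBle hBle (by linarith : (0:ℝ) ≤ M * (2 - (1/2:ℝ) ^ n))
        (by positivity : (0:ℝ) ≤ 2 * M)]
    have hkey2 : ε' * (1/2:ℝ) ^ n * ((M * (2 - (1/2:ℝ) ^ n)) * (M * (2 - (1/2:ℝ) ^ n)))
        ≤ (1/2:ℝ) ^ n / 16 := by
      calc ε' * (1/2:ℝ) ^ n * ((M * (2 - (1/2:ℝ) ^ n)) * (M * (2 - (1/2:ℝ) ^ n)))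
          ≤ ε' * (1/2:ℝ) ^ n * (4 * (M * M)) :=
            mul_le_mul_of_nonneg_left hB2 (by positivity)
        _ ≤ (1/2:ℝ) ^ n / 16 := by
            nlinarith [mul_le_mul_of_nonneg_left h64 ha0.le]
    have heB : (ε' * (1/2:ℝ) ^ n) * ((M * (2 - (1/2:ℝ) ^ n)) * (M * (2 - (1/2:ℝ) ^ n)))
        ≤ 1 / 2 := le_trans hkey2 (by nlinarith)
    obtain ⟨g, hg1, hg2, hg3, hg4, hg5⟩ :=
      aux_step σ hiso hσ μ (M * (2 - (1/2:ℝ) ^ n)) (ε' * (1/2:ℝ) ^ n) hB1 he0 heB τ h1 h2 h3 h4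
    have hkey : ε' * (1/2:ℝ) ^ n * (M * (2 - (1/2:ℝ) ^ n)) ≤ M * (1/2:ℝ) ^ n / 4 := by
      calc ε' * (1/2:ℝ) ^ n * (M * (2 - (1/2:ℝ) ^ n))
          ≤ ε' * (1/2:ℝ) ^ n * (2 * M) := mul_le_mul_of_nonneg_left hBle (by positivity)
        _ ≤ M * (1/2:ℝ) ^ n / 4 := by
            nlinarith [mul_le_mul_of_nonneg_left h64 (mul_nonneg ha0.le hM0.le), hM2,
              mul_nonneg (mul_nonneg hε'pos.le ha0.le) hM0.le]
    refine ⟨g, ⟨hg1, ?_, ?_, ?_⟩, ?_⟩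
    · intro s
      refine le_trans (hg3 s) ?_
      rw [pow_succ]
      nlinarith [hkey]
    · intro s
      refine le_trans (hg4 s) ?_
      rw [pow_succ]
      nlinarith [mul_le_mul hBle hkey2 (by positivity) (by positivity : (0:ℝ) ≤ 2 * M),
        mul_pos hM0 ha0]
    · intro s t
      refine le_trans (hg5 s t) ?_
      rw [pow_succ]
      nlinarith [mul_le_mul_of_nonneg_left hkey2 (by positivity : (0:ℝ) ≤ 2 * (ε' * (1/2:ℝ) ^ n)),
        mul_le_mul_of_nonneg_left ha1 (by positivity : (0:ℝ) ≤ ε' * (1/2:ℝ) ^ n / 8),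
        mul_nonneg hε'pos.le ha0.le]
    · intro s
      refine le_trans (hg2 s) ?_
      nlinarith [mul_le_mul_of_nonneg_left hBle (by positivity : (0:ℝ) ≤ ε' * (1/2:ℝ) ^ n)]
  choose Fn hFP hFd using step
  set seq : ∀ _ : ℕ, {τ : G → Aˣ // P _ τ} :=
    fun n => Nat.rec (motive := fun n => {τ : G → Aˣ // P n τ})
      ⟨ρ, base⟩ (fun k ih => ⟨Fn k ih.1 ih.2, hFP k ih.1 ih.2⟩) n with hseqdef
  set vs : ℕ → G → A := fun n s => ((seq n).1 s : A) with hvsdef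
  have hseq0 : vs 0 = fun s => (ρ s : A) := rfl
  have hseqd : ∀ (n : ℕ) (s : G), ‖vs (n+1) s - vs n s‖ ≤ 2 * M * ε' * (1/2:ℝ) ^ n :=
    fun n s => hFd n (seq n).1 (seq n).2 s
  have hcauchy : ∀ s : G, CauchySeq fun n => vs n s := by
    intro s
    refine cauchySeq_of_le_geometric (1/2 : ℝ) (2 * M * ε') (by norm_num) (fun n => ?_)
    rw [dist_eq_norm, norm_sub_rev]
    exact hseqd n s
  have hconv : ∀ s : G, ∃ l : A, Filter.Tendsto (fun n => vs n s) Filter.atTop (𝓝 l) :=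
    fun s => cauchySeq_tendsto_of_complete (hcauchy s)
  choose L hL using hconv
  have hdist : ∀ (n : ℕ) (s : G), dist (vs n s) (L s) ≤ 4 * M * ε' * (1/2:ℝ) ^ n := by
    intro n s
    have h1 := dist_le_of_le_geometric_of_tendsto (1/2 : ℝ) (2 * M * ε')
      (by norm_num) (fun k => by rw [dist_eq_norm, norm_sub_rev]; exact hseqd k s) (hL s) n
    calc dist (vs n s) (L s) ≤ 2 * M * ε' * (1/2:ℝ) ^ n / (1 - 1/2) := h1
      _ = 4 * M * ε' * (1/2:ℝ) ^ n := by ring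
  have hgeo0 : Filter.Tendsto (fun n : ℕ => 4 * M * ε' * (1/2:ℝ) ^ n) Filter.atTop (𝓝 0) := by
    have := tendsto_pow_atTop_nhds_zero_of_lt_one (r := (1/2:ℝ)) (by norm_num) (by norm_num)
    simpa using this.const_mul (4 * M * ε')
  have hunif : TendstoUniformly vs L Filter.atTop := by
    rw [Metric.tendstoUniformly_iff]
    intro η hη
    filter_upwards [hgeo0.eventually (eventually_lt_nhds hη)] with n hn s
    calc dist (L s) (vs n s) = dist (vs n s) (L s) := dist_comm _ _
      _ ≤ 4 * M * ε' * (1/2:ℝ) ^ n := hdist n s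
      _ < η := hn
  have hLc : Continuous L :=
    hunif.continuous (Filter.Eventually.of_forall fun n => (seq n).2.1).frequently
  have hLρ : ∀ s : G, ‖L s - (ρ s : A)‖ ≤ 4 * M * ε' := by
    intro s
    have := hdist 0 s
    rw [pow_zero, mul_one] at this
    rw [norm_sub_rev, ← dist_eq_norm]
    exact this
  have hcoc : ∀ s t : G, L s * σ s (L t) - L (s * t) = 0 := by
    intro s t
    have h1 : Filter.Tendsto (fun n => vs n s * σ s (vs n t) - vs n (s * t)) Filter.atTop
        (𝓝 (L s * σ s (L t) - L (s * t))) := by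
      refine Filter.Tendsto.sub (Filter.Tendsto.mul (hL s) ?_) (hL (s * t))
      exact (((hiso s).continuous.tendsto (L t)).comp (hL t))
    have h2 : Filter.Tendsto (fun n => vs n s * σ s (vs n t) - vs n (s * t)) Filter.atTop
        (𝓝 0) := by
      refine squeeze_zero_norm (fun n => (seq n).2.2.2.2 s t) ?_
      have := tendsto_pow_atTop_nhds_zero_of_lt_one (r := (1/2:ℝ)) (by norm_num) (by norm_num)
      simpa using this.const_mul ε'
    exact tendsto_nhds_unique h1 h2
  -- L s is invertible
  have hxlt : ∀ s : G, ‖-((L s - (ρ s : A)) * (((ρ s)⁻¹ : Aˣ) : A))‖ < 1 := by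
    intro s
    rw [norm_neg]
    calc ‖(L s - (ρ s : A)) * (((ρ s)⁻¹ : Aˣ) : A)‖
        ≤ ‖L s - (ρ s : A)‖ * ‖(((ρ s)⁻¹ : Aˣ) : A)‖ := norm_mul_le _ _
      _ ≤ (4 * M * ε') * M := mul_le_mul (hLρ s) (hbMi s) (norm_nonneg _) (by positivity)
      _ < 1 := by nlinarith [h64, hM, hM0]
  set ρ' : G → Aˣ := fun s =>
    Units.oneSub (-((L s - (ρ s : A)) * (((ρ s)⁻¹ : Aˣ) : A))) (hxlt s) * ρ s with hρ'def
  have hρ'val : ∀ s : G, (ρ' s : A) = L s := by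
    intro s
    show (1 - -((L s - (ρ s : A)) * (((ρ s)⁻¹ : Aˣ) : A))) * (ρ s : A) = L s
    rw [sub_neg_eq_add, add_mul, one_mul, mul_assoc, Units.inv_mul, mul_one]
    abel
  have hρ'c : Continuous ρ' := by
    rw [Units.continuous_iff]
    constructor
    · have h0 : Units.val ∘ ρ' = L := funext hρ'val
      rw [h0]; exact hLc
    · have h1 : ∀ s : G, ((ρ' s)⁻¹ : Aˣ) = (Ring.inverse (L s) : A) := by
        intro s
        rw [← hρ'val s, Ring.inverse_unit]
      have h2 : Continuous fun s => (Ring.inverse (L s) : A) :=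
        continuous_iff_continuousAt.2 fun s => ContinuousAt.comp (g := Ring.inverse) (f := L)
          (by rw [← hρ'val s]; exact NormedRing.inverse_continuousAt (ρ' s)) hLc.continuousAt
      simpa only [funext h1] using h2
  refine ⟨ρ', hρ'c, ?_, ?_⟩
  · intro s t
    rw [hρ'val, hρ'val, hρ'val]
    have := hcoc s t
    have h2 : L s * σ s (L t) = L (s * t) := by
      have h3 := sub_eq_zero.mp this
      exact h3
    exact h2.symm
  · intro s
    rw [hρ'val]
    refine le_trans (hLρ s) ?_
    have : ε' ≤ δ / (4 * M) := hε1
    calc 4 * M * ε' ≤ 4 * M * (δ / (4 * M)) := by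
          refine mul_le_mul_of_nonneg_left hε1 (by positivity)
      _ = δ := by field_simp
end

section
/- Let G be a compact topological group and A a unital C*-algebra, with unitary group U(A) := {u ∈ A : u*u = uu* = 1}. For every δ > 0 there exists ε > 0 with the following property: for every continuous map ρ : G → U(A) with sup_{s,t ∈ G} ‖ρ(s)ρ(t) − ρ(st)‖ ≤ ε, there exists a continuous group homomorphism ρ' : G → U(A) with sup_{s ∈ G} ‖ρ'(s) − ρ(s)‖ ≤ δ. (No boundedness hypothesis on ρ is needed since unitaries have norm 1.) -/
set_option linter.unusedSectionVars false
set_option linter.deprecated false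


open MeasureTheory Filter Topology

namespace AlmostRepAux

variable {A : Type*} [NormedRing A] [StarRing A] [CStarRing A] [CompleteSpace A]
  [NormedAlgebra ℂ A] [StarModule ℂ A]

/-- `StarModule ℝ A` derived from `StarModule ℂ A`. -/
lemma star_real_smul (r : ℝ) (a : A) : star (r • a) = r • star a := by
  rw [← Complex.coe_smul, star_smul, ← Complex.coe_smul]
  simp [Complex.star_def, Complex.conj_ofReal]

section NearUnit
variable [Nontrivial A]

lemma near_unitary (u : unitary A) {a : A} (h : ‖a - (u : A)‖ ≤ 1/4) :
    IsUnit a ∧ ‖Ring.inverse a‖ ≤ 4/3 ∧ ‖a‖ ≤ 5/4 := by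
  set t : A := star (u : A) * ((u : A) - a) with ht
  have hnt : ‖t‖ ≤ 1/4 := by
    have : ‖t‖ = ‖(u : A) - a‖ := by
      rw [ht, ← Unitary.coe_star]
      exact CStarRing.norm_mem_unitary_mul _ (Unitary.star_mem u.2)
    rw [this, norm_sub_rev]; exact h
  have hlt : ‖t‖ < 1 := lt_of_le_of_lt hnt (by norm_num)
  have key : a = (u : A) * (1 - t) := by
    have h1 : (u : A) * (star (u : A)) = 1 := Unitary.coe_mul_star_self u
    rw [ht, mul_sub, mul_one, ← mul_assoc, h1, one_mul]
    abel
  set U : Aˣ := Unitary.toUnits u * Units.oneSub t hlt with hU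
  have hUa : (U : A) = a := by
    rw [hU, Units.val_mul, Units.val_oneSub, key]; rfl
  refine ⟨⟨U, hUa⟩, ?_, ?_⟩
  · have hinv : Ring.inverse a = ((U⁻¹ : Aˣ) : A) := by
      rw [← hUa, Ring.inverse_unit]
    rw [hinv, hU, mul_inv_rev, Units.val_mul]
    have h1 : ((Units.oneSub t hlt)⁻¹ : Aˣ) = (∑' n : ℕ, t ^ n : A) := rfl
    have h2 : (((Unitary.toUnits u)⁻¹ : Aˣ) : A) = star (u : A) := by
      rfl
    rw [h1, h2]
    calc ‖(∑' n : ℕ, t ^ n : A) * star (u : A)‖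
        = ‖(∑' n : ℕ, t ^ n : A)‖ := CStarRing.norm_mul_mem_unitary _ (Unitary.star_mem u.2)
      _ ≤ ‖(1 : A)‖ - 1 + (1 - ‖t‖)⁻¹ := tsum_geometric_le_of_norm_lt_one t hlt
      _ ≤ 4/3 := by
          rw [norm_one]
          have : (1 - ‖t‖)⁻¹ ≤ (1 - 1/4 : ℝ)⁻¹ := by
            apply inv_anti₀ <;> linarith
          linarith
  · calc ‖a‖ ≤ ‖a - (u : A)‖ + ‖(u : A)‖ := by simpa using norm_add_le (a - (u:A)) (u:A)
      _ ≤ 1/4 + 1 := by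
          rw [CStarRing.norm_coe_unitary u]; linarith
      _ ≤ 5/4 := by norm_num

end NearUnit

end AlmostRepAux
section Integration

variable {G : Type*} [TopologicalSpace G] [CompactSpace G]
  [MeasurableSpace G] [OpensMeasurableSpace G]
  {A : Type*} [NormedRing A] [StarRing A] [CStarRing A] [CompleteSpace A]
  [NormedAlgebra ℂ A] [StarModule ℂ A]
  (μ : MeasureTheory.Measure G) [MeasureTheory.IsProbabilityMeasure μ]

open MeasureTheory

namespace AlmostRepAux

lemma exists_bound {f : G → A} (hf : Continuous f) : ∃ C : ℝ, 0 ≤ C ∧ ∀ s, ‖f s‖ ≤ C := by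
  obtain ⟨C, hC⟩ := (isCompact_range (hf.norm)).bddAbove
  exact ⟨max C 0, le_max_right _ _,
    fun s => le_trans (hC (Set.mem_range_self s)) (le_max_left _ _)⟩

lemma cont_integrable {f : G → A} (hf : Continuous f) : Integrable f μ := by
  borelize A
  obtain ⟨C, _, hC⟩ := exists_bound hf
  refine ⟨(stronglyMeasurable_iff_measurable_separable.2
    ⟨hf.measurable, (isCompact_range hf).isSeparable⟩).aestronglyMeasurable, ?_⟩
  exact MeasureTheory.HasFiniteIntegral.of_bounded (C := C) (ae_of_all μ hC)

lemma norm_integral_le {f : G → A} {C : ℝ} (h : ∀ t, ‖f t‖ ≤ C) :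
    ‖∫ t, f t ∂μ‖ ≤ C := by
  have := norm_integral_le_of_norm_le_const (μ := μ) (f := f) (C := C) (ae_of_all μ h)
  simpa using this

lemma const_mul_integral (c : A) {f : G → A} (hf : Integrable f μ) :
    c * ∫ t, f t ∂μ = ∫ t, c * f t ∂μ :=
  ((ContinuousLinearMap.mul ℝ A c).integral_comp_comm hf).symm

lemma integral_mul_const (c : A) {f : G → A} (hf : Integrable f μ) :
    (∫ t, f t ∂μ) * c = ∫ t, f t * c ∂μ := by
  have := (((ContinuousLinearMap.mul ℝ A).flip c).integral_comp_comm hf).symm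
  simpa using this

lemma star_integral {f : G → A} (hf : Integrable f μ) :
    star (∫ t, f t ∂μ) = ∫ t, star (f t) ∂μ := by
  letI : StarModule ℝ A := ⟨star_real_smul⟩
  have := ((starL' ℝ (A := A)).toContinuousLinearMap.integral_comp_comm hf).symm
  simpa using this

lemma integral_const_one : (∫ _ : G, (1 : A) ∂μ) = 1 := by simp

/-- continuity of a parametrized integral -/
lemma continuous_param {X : Type*} [TopologicalSpace X] {F : X → G → A}
    (hF : Continuous fun p : X × G => F p.1 p.2) :
    Continuous fun s => ∫ t, F s t ∂μ := by
  have hL : LipschitzWith 1 (fun g : C(G, A) => ∫ t, g t ∂μ) := by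
    apply LipschitzWith.of_dist_le_mul
    intro g h
    rw [NNReal.coe_one, one_mul, dist_eq_norm, dist_eq_norm, ← integral_sub (cont_integrable μ g.continuous)
      (cont_integrable μ h.continuous)]
    exact norm_integral_le μ (C := ‖g - h‖) (fun t => by
      simpa using ContinuousMap.norm_coe_le_norm (g - h) t)
  have hcurry : Continuous fun s : X => ContinuousMap.curry ⟨fun p : X × G => F p.1 p.2, hF⟩ s :=
    (ContinuousMap.curry ⟨fun p : X × G => F p.1 p.2, hF⟩).continuous
  exact hL.continuous.comp hcurry

end AlmostRepAux
end Integration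
section Step

open MeasureTheory

namespace AlmostRepAux

variable {G : Type*} [Group G] [TopologicalSpace G] [IsTopologicalGroup G] [CompactSpace G]
  [MeasurableSpace G] [BorelSpace G]
  {A : Type*} [NormedRing A] [StarRing A] [CStarRing A] [CompleteSpace A]
  [NormedAlgebra ℂ A] [StarModule ℂ A] [Nontrivial A]
  (μ : Measure G) [IsProbabilityMeasure μ] [μ.IsMulLeftInvariant]

/-- One averaging step of the Newton-type iteration. -/
noncomputable def step (f : G → A) : G → A :=
  fun s => f s + ∫ t, (f (s * t) - f s * f t) * Ring.inverse (f t) ∂μ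

theorem step_lemma (ρ : G → unitary A) {f : G → A} (hf : Continuous f)
    (hcl : ∀ s, ‖f s - (ρ s : A)‖ ≤ 1/4)
    {d : ℝ} (hd : ∀ s t, ‖f (s * t) - f s * f t‖ ≤ d) :
    Continuous (step μ f) ∧ (∀ s, ‖step μ f s - f s‖ ≤ 2 * d) ∧
      (∀ s u, ‖step μ f (s * u) - step μ f s * step μ f u‖ ≤ 4 * d ^ 2) := by
  have hd0 : 0 ≤ d := le_trans (norm_nonneg _) (hd 1 1)
  have hunit : ∀ s, IsUnit (f s) := fun s => (near_unitary (ρ s) (hcl s)).1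
  have hinv : ∀ s, ‖Ring.inverse (f s)‖ ≤ 4/3 := fun s => (near_unitary (ρ s) (hcl s)).2.1
  have hnf : ∀ s, ‖f s‖ ≤ 5/4 := fun s => (near_unitary (ρ s) (hcl s)).2.2
  -- continuity of the pointwise inverse
  have hfi : Continuous fun t => Ring.inverse (f t) := by
    rw [continuous_iff_continuousAt]
    intro x
    have h1 : ContinuousAt Ring.inverse (f x) := by
      have := NormedRing.inverse_continuousAt (hunit x).unit
      rwa [(hunit x).unit_spec] at this
    exact h1.comp hf.continuousAt
  -- abbreviations
  set D : G → G → A := fun s t => f (s * t) - f s * f t with hD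
  set E : G → A := fun s => ∫ t, D s t * Ring.inverse (f t) ∂μ with hE
  have hstep : ∀ s, step μ f s = f s + E s := fun s => rfl
  -- continuity facts
  have hDcont : Continuous fun p : G × G => D p.1 p.2 :=
    (hf.comp continuous_mul).sub ((hf.comp continuous_fst).mul (hf.comp continuous_snd))
  have hIcont : ∀ s : G, Continuous fun t => D s t * Ring.inverse (f t) := fun s =>
    ((hDcont.comp (Continuous.prodMk_right s)).mul hfi)
  have hIint : ∀ s : G, Integrable (fun t => D s t * Ring.inverse (f t)) μ := fun s =>
    cont_integrable μ (hIcont s)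
  have hEcont : Continuous E :=
    continuous_param μ (F := fun s t => D s t * Ring.inverse (f t)) (hDcont.mul (hfi.comp continuous_snd))
  -- bound on E
  have hDb : ∀ s t, ‖D s t‖ ≤ d := hd
  have hEb : ∀ s, ‖E s‖ ≤ 4/3 * d := by
    intro s
    apply norm_integral_le μ
    intro t
    calc ‖D s t * Ring.inverse (f t)‖ ≤ ‖D s t‖ * ‖Ring.inverse (f t)‖ := norm_mul_le _ _
      _ ≤ d * (4/3) := mul_le_mul (hDb s t) (hinv t) (norm_nonneg _) hd0
      _ = 4/3 * d := by ring
  refine ⟨hf.add hEcont, ?_, ?_⟩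
  · intro s
    rw [hstep s, add_sub_cancel_left]
    linarith [hEb s]
  -- the key quadratic estimate
  intro s u
  set X : A := ∫ t, D s (u * t) * Ring.inverse (f t) ∂μ with hX
  set R : A := ∫ t, D s (u * t) * (Ring.inverse (f (u * t)) * f u - Ring.inverse (f t)) ∂μ with hR
  have hXcont : Continuous fun t => D s (u * t) * Ring.inverse (f t) :=
    ((hDcont.comp (Continuous.prodMk_right s)).comp (continuous_mul_left u)).mul hfi
  have hXint : Integrable (fun t => D s (u * t) * Ring.inverse (f t)) μ := cont_integrable μ hXcont
  have hRcont : Continuous fun t => D s (u * t) * (Ring.inverse (f (u * t)) * f u - Ring.inverse (f t)) :=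
    ((hDcont.comp (Continuous.prodMk_right s)).comp (continuous_mul_left u)).mul
      (((hfi.comp (continuous_mul_left u)).mul continuous_const).sub hfi)
  have hRint : Integrable _ μ := cont_integrable μ hRcont
  -- identity A : f s * E u - E (s*u) = D s u - X
  have idA : f s * E u - E (s * u) = D s u - X := by
    have h1 : f s * E u = ∫ t, f s * (D u t * Ring.inverse (f t)) ∂μ :=
      const_mul_integral μ (f s) (hIint u)
    have h2 : f s * E u - E (s * u) =
        ∫ t, (f s * (D u t * Ring.inverse (f t)) - D (s * u) t * Ring.inverse (f t)) ∂μ := by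
      rw [h1, hE, ← integral_sub (cont_integrable μ (f := fun t => f s * (D u t * Ring.inverse (f t))) (continuous_const.mul (hIcont u))) (hIint (s * u))]
    have h3 : ∀ t, f s * (D u t * Ring.inverse (f t)) - D (s * u) t * Ring.inverse (f t)
        = D s u * (f t * Ring.inverse (f t)) - D s (u * t) * Ring.inverse (f t) := by
      intro t
      simp only [hD, mul_assoc s u t]
      noncomm_ring
    have h4 : (∫ t, (D s u * (f t * Ring.inverse (f t)) - D s (u * t) * Ring.inverse (f t)) ∂μ)
        = D s u * (∫ t, f t * Ring.inverse (f t) ∂μ) - X := by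
      rw [integral_sub (cont_integrable μ (f := fun t => D s u * (f t * Ring.inverse (f t))) (continuous_const.mul (hf.mul hfi))) hXint,
        ← const_mul_integral μ (D s u) (cont_integrable μ (f := fun t => f t * Ring.inverse (f t)) (hf.mul hfi))]
    have h5 : (∫ t, f t * Ring.inverse (f t) ∂μ) = 1 := by
      rw [show (fun t => f t * Ring.inverse (f t)) = fun _ => (1 : A) from
        funext fun t => Ring.mul_inverse_cancel (f t) (hunit t)]
      exact integral_const_one μ
    rw [h2, show (fun t => f s * (D u t * Ring.inverse (f t)) - D (s * u) t * Ring.inverse (f t))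
      = (fun t => D s u * (f t * Ring.inverse (f t)) - D s (u * t) * Ring.inverse (f t)) from
      funext h3, h4, h5, mul_one]
  -- identity B : E s * f u = X + R
  have idB : E s * f u = X + R := by
    have hsub : E s = ∫ t, D s (u * t) * Ring.inverse (f (u * t)) ∂μ := by
      rw [hE]
      exact (integral_mul_left_eq_self (fun t => D s t * Ring.inverse (f t)) u).symm
    have h1 : E s * f u = ∫ t, (D s (u * t) * Ring.inverse (f (u * t))) * f u ∂μ := by
      rw [hsub]
      exact integral_mul_const μ (f u)
        (cont_integrable μ (((hDcont.comp (Continuous.prodMk_right s)).comp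
          (continuous_mul_left u)).mul (hfi.comp (continuous_mul_left u))))
    have h2 : ∀ t, (D s (u * t) * Ring.inverse (f (u * t))) * f u
        = D s (u * t) * Ring.inverse (f t)
          + D s (u * t) * (Ring.inverse (f (u * t)) * f u - Ring.inverse (f t)) := by
      intro t; noncomm_ring
    rw [h1, show (fun t => (D s (u * t) * Ring.inverse (f (u * t))) * f u)
      = (fun t => D s (u * t) * Ring.inverse (f t)
          + D s (u * t) * (Ring.inverse (f (u * t)) * f u - Ring.inverse (f t))) from funext h2,
      integral_add hXint hRint]
  -- bound on R
  have hRb : ‖R‖ ≤ 16/9 * d^2 := by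
    apply norm_integral_le μ
    intro t
    have key : Ring.inverse (f (u * t)) * f u - Ring.inverse (f t)
        = Ring.inverse (f (u * t)) * (f u * f t - f (u * t)) * Ring.inverse (f t) := by
      have e1 : Ring.inverse (f (u * t)) * f (u * t) = 1 :=
        Ring.inverse_mul_cancel (f (u * t)) (hunit (u * t))
      have e2 : f t * Ring.inverse (f t) = 1 := Ring.mul_inverse_cancel (f t) (hunit t)
      calc Ring.inverse (f (u * t)) * f u - Ring.inverse (f t)
          = Ring.inverse (f (u * t)) * f u * 1 - 1 * Ring.inverse (f t) := by
            rw [mul_one, one_mul]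
        _ = Ring.inverse (f (u * t)) * f u * (f t * Ring.inverse (f t))
            - (Ring.inverse (f (u * t)) * f (u * t)) * Ring.inverse (f t) := by rw [e1, e2]
        _ = Ring.inverse (f (u * t)) * (f u * f t - f (u * t)) * Ring.inverse (f t) := by
            noncomm_ring
    have hmid : ‖f u * f t - f (u * t)‖ ≤ d := by rw [norm_sub_rev]; exact hDb u t
    calc ‖D s (u * t) * (Ring.inverse (f (u * t)) * f u - Ring.inverse (f t))‖
        ≤ ‖D s (u * t)‖ * ‖Ring.inverse (f (u * t)) * f u - Ring.inverse (f t)‖ := norm_mul_le _ _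
      _ ≤ d * (4/3 * d * (4/3)) := by
          apply mul_le_mul (hDb s (u * t)) _ (norm_nonneg _) hd0
          rw [key]
          calc ‖Ring.inverse (f (u * t)) * (f u * f t - f (u * t)) * Ring.inverse (f t)‖
              ≤ ‖Ring.inverse (f (u * t)) * (f u * f t - f (u * t))‖ * ‖Ring.inverse (f t)‖ :=
                norm_mul_le _ _
            _ ≤ (4/3 * d) * (4/3) := by
                apply mul_le_mul _ (hinv t) (norm_nonneg _) (by positivity)
                calc ‖Ring.inverse (f (u * t)) * (f u * f t - f (u * t))‖
                    ≤ ‖Ring.inverse (f (u * t))‖ * ‖f u * f t - f (u * t)‖ := norm_mul_le _ _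
                  _ ≤ 4/3 * d := mul_le_mul (hinv (u * t)) hmid (norm_nonneg _) (by norm_num)
      _ = 16/9 * d^2 := by ring
  -- assemble
  have expand : step μ f (s * u) - step μ f s * step μ f u
      = (D s u - (f s * E u - E (s * u))) - E s * f u - E s * E u := by
    rw [hstep (s * u), hstep s, hstep u]
    simp only [hD]
    noncomm_ring
  rw [expand, idA, idB]
  have : D s u - (D s u - X) - (X + R) - E s * E u = -R - E s * E u := by noncomm_ring
  rw [this]
  calc ‖-R - E s * E u‖ ≤ ‖-R‖ + ‖E s * E u‖ := norm_sub_le _ _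
    _ ≤ 16/9 * d^2 + (4/3 * d) * (4/3 * d) := by
        rw [norm_neg]
        exact add_le_add hRb ((norm_mul_le _ _).trans
          (mul_le_mul (hEb s) (hEb u) (norm_nonneg _) (by positivity)))
    _ ≤ 4 * d ^ 2 := by nlinarith [sq_nonneg d]

end AlmostRepAux
end Step
section Iterate

open MeasureTheory Filter Topology

namespace AlmostRepAux

variable {G : Type*} [Group G] [TopologicalSpace G] [IsTopologicalGroup G] [CompactSpace G]
  [MeasurableSpace G] [BorelSpace G]
  {A : Type*} [NormedRing A] [StarRing A] [CStarRing A] [CompleteSpace A]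
  [NormedAlgebra ℂ A] [StarModule ℂ A] [Nontrivial A]
  (μ : Measure G) [IsProbabilityMeasure μ] [μ.IsMulLeftInvariant]

include μ in
theorem exists_exact (ρ : G → unitary A) (hρ : Continuous fun s => (ρ s : A))
    {ε : ℝ} (hε0 : 0 ≤ ε) (hε : ε ≤ 1/16)
    (hdef : ∀ s t : G, ‖(ρ s : A) * (ρ t : A) - (ρ (s * t) : A)‖ ≤ ε) :
    ∃ g : G → A, Continuous g ∧ (∀ s u, g (s * u) = g s * g u) ∧
      (∀ s, ‖g s - (ρ s : A)‖ ≤ 4 * ε) := by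
  set F : ℕ → G → A := fun n => (step μ)^[n] (fun s => (ρ s : A)) with hF
  have hP : ∀ n, Continuous (F n) ∧ (∀ s, ‖F n s - (ρ s : A)‖ ≤ 4 * ε * (1 - (1/2 : ℝ)^n))
      ∧ (∀ s u, ‖F n (s * u) - F n s * F n u‖ ≤ ε * (1/2 : ℝ)^n) := by
    intro n
    induction n with
    | zero =>
      refine ⟨hρ, fun s => by simp [hF], fun s u => by
        have := hdef s u
        rw [norm_sub_rev] at this
        simpa [hF] using this⟩
    | succ n ih =>
      obtain ⟨hc, hcl, hdn⟩ := ih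
      have hcl' : ∀ s, ‖F n s - (ρ s : A)‖ ≤ 1/4 := by
        intro s
        refine le_trans (hcl s) ?_
        have h1 : (0:ℝ) ≤ (1/2 : ℝ)^n := by positivity
        have h2 : (1/2 : ℝ)^n ≤ 1 := pow_le_one₀ (by norm_num) (by norm_num)
        nlinarith
      obtain ⟨hc', hcl2, hd2⟩ := step_lemma μ ρ hc hcl' hdn
      have hFn : F (n + 1) = step μ (F n) := Function.iterate_succ_apply' _ _ _
      refine ⟨by rw [hFn]; exact hc', ?_, ?_⟩
      · intro s
        have t1 : ‖F (n+1) s - F n s‖ ≤ 2 * (ε * (1/2:ℝ)^n) := by rw [hFn]; exact hcl2 s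
        have t2 := hcl s
        calc ‖F (n+1) s - (ρ s : A)‖ ≤ ‖F (n+1) s - F n s‖ + ‖F n s - (ρ s : A)‖ := by
              simpa [dist_eq_norm] using dist_triangle (F (n+1) s) (F n s) ((ρ s : A))
          _ ≤ 2 * (ε * (1/2:ℝ)^n) + 4 * ε * (1 - (1/2:ℝ)^n) := add_le_add t1 t2
          _ = 4 * ε * (1 - (1/2:ℝ)^(n+1)) := by ring
      · intro s u
        rw [hFn]
        refine le_trans (hd2 s u) ?_
        have h1 : (0:ℝ) ≤ (1/2 : ℝ)^n := by positivity
        have h2 : ε * (1/2:ℝ)^n ≤ 1/16 := by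
          have : (1/2 : ℝ)^n ≤ 1 := pow_le_one₀ (by norm_num) (by norm_num)
          nlinarith
        have hx0 : (0:ℝ) ≤ ε * (1/2:ℝ)^n := by positivity
        have : 4 * (ε * (1/2:ℝ)^n)^2 ≤ (1/2) * (ε * (1/2:ℝ)^n) := by nlinarith [hx0, h2]
        calc (4 : ℝ) * (ε * (1/2:ℝ)^n)^2 ≤ (1/2) * (ε * (1/2:ℝ)^n) := this
          _ = ε * (1/2:ℝ)^(n+1) := by ring
  -- bundle and take the limit
  set Fb : ℕ → C(G, A) := fun n => ⟨F n, (hP n).1⟩ with hFb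
  have hdist : ∀ n, dist (Fb n) (Fb (n + 1)) ≤ (2 * ε) * (1/2 : ℝ)^n := by
    intro n
    rw [ContinuousMap.dist_le (by positivity)]
    intro x
    have hFn : F (n + 1) = step μ (F n) := Function.iterate_succ_apply' _ _ _
    obtain ⟨hc, hcl, hdn⟩ := hP n
    have hcl' : ∀ s, ‖F n s - (ρ s : A)‖ ≤ 1/4 := by
      intro s
      refine le_trans (hcl s) ?_
      have h1 : (0:ℝ) ≤ (1/2 : ℝ)^n := by positivity
      have h2 : (1/2 : ℝ)^n ≤ 1 := pow_le_one₀ (by norm_num) (by norm_num)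
      nlinarith
    obtain ⟨-, hcl2, -⟩ := step_lemma μ ρ hc hcl' hdn
    rw [dist_comm, dist_eq_norm]
    calc ‖Fb (n+1) x - Fb n x‖ = ‖step μ (F n) x - F n x‖ := by rw [hFb]; simp [hFn]
      _ ≤ 2 * (ε * (1/2:ℝ)^n) := hcl2 x
      _ = 2 * ε * (1/2:ℝ)^n := by ring
  have hcauchy : CauchySeq Fb := cauchySeq_of_le_geometric (1/2) (2 * ε) (by norm_num) hdist
  obtain ⟨g, hg⟩ := cauchySeq_tendsto_of_complete hcauchy
  have hpt : ∀ s, Tendsto (fun n => F n s) atTop (𝓝 (g s)) := by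
    intro s
    have := ((continuous_eval_const s).tendsto g).comp hg
    simpa [hFb, Function.comp_def] using this
  have hhalf : Tendsto (fun n : ℕ => (1/2 : ℝ)^n) atTop (𝓝 0) :=
    tendsto_pow_atTop_nhds_zero_of_lt_one (by norm_num) (by norm_num)
  refine ⟨fun s => g s, g.continuous, ?_, ?_⟩
  · intro s u
    have h1 : Tendsto (fun n => ‖F n (s * u) - F n s * F n u‖) atTop
        (𝓝 ‖g (s * u) - g s * g u‖) := (Tendsto.sub (hpt (s * u)) ((hpt s).mul (hpt u))).norm
    have h2 : Tendsto (fun n : ℕ => ε * (1/2 : ℝ)^n) atTop (𝓝 0) := by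
      simpa using hhalf.const_mul ε
    have h3 : ‖g (s * u) - g s * g u‖ ≤ 0 :=
      le_of_tendsto_of_tendsto' h1 h2 fun n => (hP n).2.2 s u
    exact sub_eq_zero.1 (norm_le_zero_iff.1 h3)
  · intro s
    have h1 : Tendsto (fun n => ‖F n s - (ρ s : A)‖) atTop (𝓝 ‖g s - (ρ s : A)‖) :=
      ((hpt s).sub tendsto_const_nhds).norm
    refine le_of_tendsto' h1 fun n => le_trans ((hP n).2.1 s) ?_
    have h2 : (0:ℝ) ≤ (1/2 : ℝ)^n := by positivity
    nlinarith

end AlmostRepAux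
end Iterate
section SqrtBounds
namespace AlmostRepAux

lemma sqrt_bounds {x c : ℝ} (hc0 : 0 ≤ c) (hc : c ≤ 1/4) (hx : |x - 1| ≤ c) :
    Real.sqrt x ≤ 2 ∧ (Real.sqrt x)⁻¹ ≤ 2 ∧ |Real.sqrt x - 1| ≤ 2*c ∧
      |(Real.sqrt x)⁻¹ - 1| ≤ 2*c := by
  obtain ⟨hxl, hxr⟩ := abs_le.1 hx
  have hx1 : (3/4 : ℝ) ≤ x := by linarith
  have hx2 : x ≤ 5/4 := by linarith
  set y := Real.sqrt x with hy
  have hy0 : 0 ≤ y := Real.sqrt_nonneg x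
  have hyy : y * y = x := Real.mul_self_sqrt (by linarith)
  have hylb : 1/2 ≤ y := by nlinarith
  have hyub : y ≤ 2 := by nlinarith
  have hz : y * y⁻¹ = 1 := mul_inv_cancel₀ (by linarith)
  refine ⟨hyub, by nlinarith, ?_, ?_⟩
  · rw [abs_le]
    constructor <;> nlinarith
  · rw [abs_le]
    constructor <;> nlinarith

end AlmostRepAux
end SqrtBounds
section Unitarize

open MeasureTheory Filter Topology

namespace AlmostRepAux

variable {G : Type*} [Group G] [TopologicalSpace G] [IsTopologicalGroup G] [CompactSpace G]
  [MeasurableSpace G] [BorelSpace G]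
  {A : Type*} [NormedRing A] [StarRing A] [CStarRing A] [CompleteSpace A]
  [NormedAlgebra ℂ A] [StarModule ℂ A] [Nontrivial A]
  (μ : Measure G) [IsProbabilityMeasure μ] [μ.IsMulLeftInvariant]

include μ in
theorem unitarize (ρ : G → unitary A) {g : G → A} (hg : Continuous g)
    (hom : ∀ s u : G, g (s * u) = g s * g u)
    {ε : ℝ} (hε0 : 0 ≤ ε) (hε : ε ≤ 1/100) (hcl : ∀ s, ‖g s - (ρ s : A)‖ ≤ 4 * ε) :
    ∃ ρ' : G →* unitary A, Continuous ρ' ∧ ∀ s : G, ‖(ρ' s : A) - (ρ s : A)‖ ≤ 96 * ε := by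
  letI : CStarAlgebra A := { }
  have hcl' : ∀ s, ‖g s - (ρ s : A)‖ ≤ 1/4 := fun s => le_trans (hcl s) (by linarith)
  have hunit : ∀ s, IsUnit (g s) := fun s => (near_unitary (ρ s) (hcl' s)).1
  have hnf : ∀ s, ‖g s‖ ≤ 5/4 := fun s => (near_unitary (ρ s) (hcl' s)).2.2
  have hg1 : g 1 = 1 := by
    have h := hom 1 1
    rw [one_mul] at h
    exact ((hunit 1).mul_left_cancel (by rw [mul_one, ← h])).symm
  -- the averaged positive element
  have hGGstar : Continuous fun t => g t * star (g t) := hg.mul hg.star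
  have hint : Integrable (fun t => g t * star (g t)) μ := cont_integrable μ hGGstar
  set P : A := ∫ t, g t * star (g t) ∂μ with hP
  have hPsa : IsSelfAdjoint P := by
    rw [IsSelfAdjoint, hP, star_integral μ hint]
    congr 1
    funext t
    rw [star_mul, star_star]
  have hPb : ‖P - 1‖ ≤ 9 * ε := by
    have h1 : P - 1 = ∫ t, (g t * star (g t) - 1) ∂μ := by
      rw [integral_sub hint (integrable_const 1), integral_const]
      simp [measure_univ, hP]
    rw [h1]
    apply norm_integral_le μ
    intro t
    have h2 : (ρ t : A) * star (ρ t : A) = 1 := Unitary.coe_mul_star_self (ρ t)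
    have h3 : g t * star (g t) - 1
        = g t * star (g t - (ρ t : A)) + (g t - (ρ t : A)) * star (ρ t : A) := by
      rw [star_sub, ← h2]
      noncomm_ring
    rw [h3]
    calc ‖g t * star (g t - (ρ t : A)) + (g t - (ρ t : A)) * star (ρ t : A)‖
        ≤ ‖g t * star (g t - (ρ t : A))‖ + ‖(g t - (ρ t : A)) * star (ρ t : A)‖ :=
          norm_add_le _ _
      _ ≤ ‖g t‖ * ‖star (g t - (ρ t : A))‖ + ‖g t - (ρ t : A)‖ * ‖star (ρ t : A)‖ :=
          add_le_add (norm_mul_le _ _) (norm_mul_le _ _)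
      _ ≤ (5/4) * (4 * ε) + (4 * ε) * 1 := by
          rw [norm_star, norm_star, CStarRing.norm_coe_unitary]
          exact add_le_add (mul_le_mul (hnf t) (hcl t) (norm_nonneg _) (by norm_num))
            (by simpa using (hcl t))
      _ = 9 * ε := by ring
  have hPinv : ∀ s, g s * P * star (g s) = P := by
    intro s
    have h1 : g s * P = ∫ t, g s * (g t * star (g t)) ∂μ := const_mul_integral μ _ hint
    have h2 : g s * P * star (g s) = ∫ t, g s * (g t * star (g t)) * star (g s) ∂μ := by
      rw [h1]
      exact integral_mul_const μ _ (cont_integrable μ (continuous_const.mul hGGstar))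
    rw [h2, show (fun t => g s * (g t * star (g t)) * star (g s))
        = fun t => g (s * t) * star (g (s * t)) from funext fun t => by
          rw [hom s t, star_mul]; noncomm_ring]
    exact integral_mul_left_eq_self (fun t => g t * star (g t)) s
  -- spectrum of P
  have hsp : ∀ x ∈ spectrum ℝ P, |x - 1| ≤ 9 * ε := by
    intro x hx
    have h1 : x - 1 ∈ spectrum ℝ (P - algebraMap ℝ A 1) := by
      rw [← spectrum.sub_singleton_eq]
      exact Set.sub_mem_sub hx rfl
    have h2 := spectrum.norm_le_norm_of_mem h1
    rw [map_one] at h2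
    rw [← Real.norm_eq_abs]
    exact le_trans h2 hPb
  have hsple : ∀ x ∈ spectrum ℝ P, 3/4 ≤ x ∧ x ≤ 5/4 := by
    intro x hx
    obtain ⟨h1, h2⟩ := abs_le.1 (hsp x hx)
    constructor <;> nlinarith
  have hc9 : (0:ℝ) ≤ 9 * ε := by linarith
  have hc9' : (9:ℝ) * ε ≤ 1/4 := by linarith
  -- square root and inverse square root via cfc
  set Q' : A := cfc Real.sqrt P with hQ'
  set Q : A := cfc (fun x : ℝ => (Real.sqrt x)⁻¹) P with hQ
  have hQ'cont : ContinuousOn Real.sqrt (spectrum ℝ P) := Real.continuous_sqrt.continuousOn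
  have hsqrt_ne : ∀ x ∈ spectrum ℝ P, Real.sqrt x ≠ 0 := by
    intro x hx
    have := (hsple x hx).1
    positivity
  have hQcont : ContinuousOn (fun x : ℝ => (Real.sqrt x)⁻¹) (spectrum ℝ P) :=
    hQ'cont.inv₀ hsqrt_ne
  have hQsa : IsSelfAdjoint Q := cfc_predicate _ P
  have hQ'sa : IsSelfAdjoint Q' := cfc_predicate _ P
  have hQQ' : Q * Q' = 1 := by
    rw [hQ, hQ', ← cfc_mul _ _ P hQcont hQ'cont,
      cfc_congr (g := fun _ : ℝ => (1:ℝ)) (fun x hx => inv_mul_cancel₀ (hsqrt_ne x hx)),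
      cfc_const 1 P hPsa, map_one]
  have hQ'Q : Q' * Q = 1 := by
    rw [hQ, hQ', ← cfc_mul _ _ P hQ'cont hQcont,
      cfc_congr (g := fun _ : ℝ => (1:ℝ)) (fun x hx => mul_inv_cancel₀ (hsqrt_ne x hx)),
      cfc_const 1 P hPsa, map_one]
  have hP' : Q' * Q' = P := by
    rw [hQ', ← cfc_mul _ _ P hQ'cont hQ'cont,
      cfc_congr (g := fun x : ℝ => x) (fun x hx => Real.mul_self_sqrt (by
        linarith [(hsple x hx).1])),
      cfc_id' ℝ P]
  -- norm estimates
  have hQ'n : ‖Q'‖ ≤ 2 := by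
    rw [hQ']
    refine norm_cfc_le (by norm_num) fun x hx => ?_
    rw [Real.norm_eq_abs, abs_of_nonneg (Real.sqrt_nonneg x)]
    exact (sqrt_bounds hc9 hc9' (hsp x hx)).1
  have hQn : ‖Q‖ ≤ 2 := by
    rw [hQ]
    refine norm_cfc_le (by norm_num) fun x hx => ?_
    rw [Real.norm_eq_abs, abs_of_nonneg (by positivity)]
    exact (sqrt_bounds hc9 hc9' (hsp x hx)).2.1
  have hQ'b : ‖Q' - 1‖ ≤ 18 * ε := by
    have h1 : Q' - 1 = cfc (fun x : ℝ => Real.sqrt x - 1) P := by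
      rw [cfc_sub _ _ P hQ'cont continuousOn_const, cfc_const 1 P hPsa, map_one, hQ']
    rw [h1]
    refine norm_cfc_le (by linarith) fun x hx => ?_
    rw [Real.norm_eq_abs]
    have := (sqrt_bounds hc9 hc9' (hsp x hx)).2.2.1
    linarith
  have hQb : ‖Q - 1‖ ≤ 18 * ε := by
    have h1 : Q - 1 = cfc (fun x : ℝ => (Real.sqrt x)⁻¹ - 1) P := by
      rw [cfc_sub _ _ P hQcont continuousOn_const, cfc_const 1 P hPsa, map_one, hQ]
    rw [h1]
    refine norm_cfc_le (by linarith) fun x hx => ?_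
    rw [Real.norm_eq_abs]
    have := (sqrt_bounds hc9 hc9' (hsp x hx)).2.2.2
    linarith
  -- the unitarized representation
  set w : G → A := fun s => Q * g s * Q' with hw
  have hQu : IsUnit Q := ⟨⟨Q, Q', hQQ', hQ'Q⟩, rfl⟩
  have hwmem : ∀ s, w s ∈ unitary A := by
    intro s
    have hstar : star (w s) = Q' * (star (g s) * Q) := by
      rw [hw]
      simp only
      rw [star_mul, star_mul, hQsa.star_eq, hQ'sa.star_eq]
    have h2 : w s * star (w s) = 1 := by
      rw [hstar, hw]
      simp only
      calc Q * g s * Q' * (Q' * (star (g s) * Q))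
          = Q * (g s * (Q' * Q') * star (g s)) * Q := by noncomm_ring
        _ = Q * (g s * P * star (g s)) * Q := by rw [hP']
        _ = Q * P * Q := by rw [hPinv s]
        _ = Q * (Q' * Q') * Q := by rw [hP']
        _ = (Q * Q') * (Q' * Q) := by noncomm_ring
        _ = 1 := by rw [hQQ', hQ'Q, one_mul]
    have hwu : IsUnit (w s) := by
      rw [hw]
      exact (hQu.mul (hunit s)).mul ⟨⟨Q', Q, hQ'Q, hQQ'⟩, rfl⟩
    have h1 : star (w s) * w s = 1 := by
      have hidem : (star (w s) * w s) * (star (w s) * w s) = (star (w s) * w s) * 1 := by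
        calc (star (w s) * w s) * (star (w s) * w s)
            = star (w s) * (w s * star (w s)) * w s := by noncomm_ring
          _ = (star (w s) * w s) * 1 := by rw [h2]; simp
      exact (hwu.star.mul hwu).mul_left_cancel hidem
    exact Unitary.mem_iff.2 ⟨h1, h2⟩
  have hwmul : ∀ s u, w (s * u) = w s * w u := by
    intro s u
    rw [hw]
    simp only
    rw [hom s u]
    calc Q * (g s * g u) * Q' = Q * (g s * (Q' * Q) * g u) * Q' := by rw [hQ'Q, mul_one]
      _ = (Q * g s * Q') * (Q * g u * Q') := by noncomm_ring
  have hwone : w 1 = 1 := by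
    rw [hw]
    simp only
    rw [hg1, mul_one, hQQ']
  refine ⟨{ toFun := fun s => ⟨w s, hwmem s⟩
            map_one' := Subtype.ext hwone
            map_mul' := fun s u => Subtype.ext (hwmul s u) }, ?_, ?_⟩
  · apply continuous_induced_rng.2
    exact (continuous_const.mul hg).mul continuous_const
  · intro s
    have hdiff : w s - g s = (Q - 1) * (g s * Q') + g s * (Q' - 1) := by
      rw [hw]; simp only; noncomm_ring
    have h1 : ‖w s - g s‖ ≤ 68 * ε := by
      rw [hdiff]
      calc ‖(Q - 1) * (g s * Q') + g s * (Q' - 1)‖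
          ≤ ‖(Q - 1) * (g s * Q')‖ + ‖g s * (Q' - 1)‖ := norm_add_le _ _
        _ ≤ ‖Q - 1‖ * (‖g s‖ * ‖Q'‖) + ‖g s‖ * ‖Q' - 1‖ := by
            refine add_le_add ((norm_mul_le _ _).trans ?_) (norm_mul_le _ _)
            exact mul_le_mul_of_nonneg_left (norm_mul_le _ _) (norm_nonneg _)
        _ ≤ (18 * ε) * ((5/4) * 2) + (5/4) * (18 * ε) := by
            refine add_le_add (mul_le_mul hQb ?_ (by positivity) (by linarith)) ?_
            · exact mul_le_mul (hnf s) hQ'n (norm_nonneg _) (by norm_num)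
            · exact mul_le_mul (hnf s) hQ'b (norm_nonneg _) (by norm_num)
        _ ≤ 68 * ε := by nlinarith
    calc ‖w s - (ρ s : A)‖ ≤ ‖w s - g s‖ + ‖g s - (ρ s : A)‖ := by
          simpa [dist_eq_norm] using dist_triangle (w s) (g s) ((ρ s : A))
      _ ≤ 68 * ε + 4 * ε := add_le_add h1 (hcl s)
      _ ≤ 96 * ε := by linarith

end AlmostRepAux
end Unitarize
/-- Let `G` be a compact topological group and `A` a unital C*-algebra
with unitary group `unitary A`. For every `δ > 0` there is `ε > 0` such that every
continuous `ρ : G → unitary A` with `‖ρ s * ρ t - ρ (s*t)‖ ≤ ε` for all `s, t` is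
uniformly within `δ` of a continuous group homomorphism `G → unitary A`. -/
theorem almost_unitary_rep_near_rep {G : Type*} [Group G] [TopologicalSpace G]
    [IsTopologicalGroup G] [CompactSpace G]
    {A : Type*} [NormedRing A] [StarRing A] [CStarRing A] [CompleteSpace A]
    [NormedAlgebra ℂ A] [StarModule ℂ A]
    (δ : ℝ) (hδ : 0 < δ) :
    ∃ ε > 0, ∀ ρ : G → unitary A, Continuous ρ →
      (∀ s t : G, ‖(ρ s : A) * (ρ t : A) - (ρ (s * t) : A)‖ ≤ ε) →
      ∃ ρ' : G →* unitary A, Continuous ρ' ∧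
        ∀ s : G, ‖(ρ' s : A) - (ρ s : A)‖ ≤ δ := by
  rcases subsingleton_or_nontrivial A with hA | hA
  · refine ⟨1, one_pos, fun ρ hρ hdef => ⟨1, continuous_const, fun s => ?_⟩⟩
    have h0 : ((1 : G →* unitary A) s : A) - (ρ s : A) = 0 := Subsingleton.elim _ _
    rw [h0, norm_zero]
    exact hδ.le
  · borelize G
    haveI : Nonempty G := ⟨1⟩
    set K₀ : TopologicalSpace.PositiveCompacts G :=
      ⟨⟨Set.univ, isCompact_univ⟩, by simp⟩ with hK₀
    set μ : MeasureTheory.Measure G := MeasureTheory.Measure.haarMeasure K₀ with hμ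
    haveI : MeasureTheory.IsProbabilityMeasure μ := ⟨MeasureTheory.Measure.haarMeasure_self⟩
    set ε : ℝ := min δ 1 / 100 with hε
    have hε0 : 0 < ε := by positivity
    have hε1 : ε ≤ 1/100 := by
      rw [hε]
      have : min δ 1 ≤ 1 := min_le_right _ _
      linarith
    refine ⟨ε, hε0, fun ρ hρ hdef => ?_⟩
    have hρc : Continuous fun s => (ρ s : A) := continuous_subtype_val.comp hρ
    obtain ⟨g, hgc, hghom, hgcl⟩ := AlmostRepAux.exists_exact μ ρ hρc hε0.le
      (by linarith) hdef
    obtain ⟨ρ', hρ'c, hρ'cl⟩ := AlmostRepAux.unitarize μ ρ hgc hghom hε0.le hε1 hgcl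
    refine ⟨ρ', hρ'c, fun s => le_trans (hρ'cl s) ?_⟩
    have h1 : min δ 1 ≤ δ := min_le_left _ _
    rw [hε]
    linarith
end

section
/- Let G be a compact topological group acting on a real unital Banach algebra A by isometric unital algebra automorphisms, written (s, a) ↦ s • a, and let M ≥ 1. There exists a constant C > 0, depending only on M, with the following property: for every map ρ : G → Aˣ with ‖ρ(s)‖ ≤ M and ‖ρ(s)⁻¹‖ ≤ M for all s, every 0 < ε ≤ 1, and every map β : G × G → A with sup_{s,t} ‖β(s,t)‖ ≤ ε and exp(β(s,t)) = ρ(s) · (s • ρ(t)) · ρ(st)⁻¹ for all s, t ∈ G, one has, writing s ▷ x := ρ(s) · (s • x) · ρ(s)⁻¹, the estimate sup_{s,t,u ∈ G} ‖ s ▷ β(t,u) − β(st, u) + β(s, tu) − β(s,t) ‖ ≤ C ε². -/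
open NormedSpace Nat

lemma two_pow_le_fact (n : ℕ) : (2:ℕ) ^ (n+1) ≤ (n+2) ! := by
  induction n with
  | zero => norm_num [Nat.factorial]
  | succ n ih =>
      calc (2:ℕ) ^ (n+2) = 2 * 2 ^ (n+1) := by ring
      _ ≤ 2 * (n+2) ! := by omega
      _ ≤ (n+3) * (n+2) ! := by nlinarith [Nat.factorial_pos (n+2)]
      _ = (n+3) ! := rfl

lemma norm_exp_sub_one_sub_le {A : Type*} [NormedRing A] [NormedAlgebra ℝ A]
    [CompleteSpace A] (x : A) (hx : ‖x‖ ≤ 1) :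
    ‖exp x - 1 - x‖ ≤ ‖x‖ ^ 2 := by
  have hs : Summable fun n : ℕ => ((n ! : ℝ)⁻¹) • x ^ n := expSeries_summable' (𝕂 := ℝ) x
  have h0 : exp x = ∑' n : ℕ, ((n ! : ℝ)⁻¹) • x ^ n := by rw [exp_eq_tsum ℝ]
  have h1 : exp x = 1 + (x + ∑' n : ℕ, (((n+2) ! : ℝ)⁻¹) • x ^ (n+2)) := by
    rw [h0, hs.tsum_eq_zero_add]
    congr 1
    · simp
    rw [((summable_nat_add_iff 1).2 hs).tsum_eq_zero_add]
    congr 1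
    · simp
  have h2 : exp x - 1 - x = ∑' n : ℕ, (((n+2) ! : ℝ)⁻¹) • x ^ (n+2) := by
    rw [h1]; abel
  rw [h2]
  have hsn : Summable fun n : ℕ => ‖(((n+2) ! : ℝ)⁻¹) • x ^ (n+2)‖ :=
    (summable_nat_add_iff 2).2 (norm_expSeries_summable' (𝕂 := ℝ) x)
  have hgeom : Summable fun n : ℕ => ‖x‖ ^ 2 * (1/2 : ℝ) ^ (n+1) := by
    apply Summable.mul_left
    exact (summable_geometric_of_lt_one (by norm_num) (by norm_num)).comp_injective
      (add_left_injective 1)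
  calc ‖∑' n : ℕ, (((n+2) ! : ℝ)⁻¹) • x ^ (n+2)‖
      ≤ ∑' n : ℕ, ‖(((n+2) ! : ℝ)⁻¹) • x ^ (n+2)‖ := norm_tsum_le_tsum_norm hsn
    _ ≤ ∑' n : ℕ, ‖x‖ ^ 2 * (1/2 : ℝ) ^ (n+1) := by
        apply Summable.tsum_le_tsum _ hsn hgeom
        intro n
        have hfac : ((2:ℝ)) ^ (n+1) ≤ ((n+2) ! : ℝ) := by
          exact_mod_cast Nat.cast_le.2 (two_pow_le_fact n)
        have h1 : ‖(((n+2) ! : ℝ)⁻¹) • x ^ (n+2)‖ = (((n+2) ! : ℝ)⁻¹) * ‖x ^ (n+2)‖ := by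
          rw [norm_smul, Real.norm_eq_abs, abs_of_nonneg (by positivity)]
        rw [h1]
        have hxp : ‖x ^ (n+2)‖ ≤ ‖x‖ ^ 2 := by
          calc ‖x ^ (n+2)‖ ≤ ‖x‖ ^ (n+2) := norm_pow_le' x (by omega)
          _ ≤ ‖x‖ ^ 2 := pow_le_pow_of_le_one (norm_nonneg x) hx (by omega)
        have hinv : (((n+2) ! : ℝ))⁻¹ ≤ (1/2 : ℝ) ^ (n+1) := by
          rw [one_div, inv_pow]
          exact inv_anti₀ (by positivity) hfac
        calc (((n+2) ! : ℝ)⁻¹) * ‖x ^ (n+2)‖ ≤ (1/2:ℝ)^(n+1) * ‖x‖^2 := by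
              apply mul_le_mul hinv hxp (norm_nonneg _) (by positivity)
          _ = ‖x‖^2 * (1/2:ℝ)^(n+1) := by ring
    _ = ‖x‖ ^ 2 * ∑' n : ℕ, (1/2 : ℝ) ^ (n+1) := tsum_mul_left
    _ = ‖x‖ ^ 2 * 1 := by
        congr 1
        have : ∑' n : ℕ, (1/2 : ℝ) ^ (n+1) = (1/2) * ∑' n : ℕ, (1/2:ℝ)^n := by
          rw [← tsum_mul_left]; congr 1; ext n; ring
        rw [this, tsum_geometric_of_lt_one (by norm_num) (by norm_num)]
        norm_num
    _ = ‖x‖ ^ 2 := mul_one _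

lemma exp_mul_exp_sub_bound {A : Type*} [NormedRing A] [NormedAlgebra ℝ A]
    [CompleteSpace A] (x y : A) (hx : ‖x‖ ≤ 1) (hy : ‖y‖ ≤ 1) :
    ‖exp x * exp y - 1 - x - y‖ ≤ 6 * (‖x‖ + ‖y‖) ^ 2 := by
  set Rx := exp x - 1 - x with hRxdef
  set Ry := exp y - 1 - y with hRydef
  have hexpx : exp x = 1 + x + Rx := by rw [hRxdef]; abel
  have hexpy : exp y = 1 + y + Ry := by rw [hRydef]; abel
  have hid : exp x * exp y - 1 - x - y
      = x*y + x*Ry + Rx + Rx*y + Rx*Ry + Ry := by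
    rw [hexpx, hexpy]; noncomm_ring
  have hRx : ‖Rx‖ ≤ ‖x‖ ^ 2 := norm_exp_sub_one_sub_le x hx
  have hRy : ‖Ry‖ ≤ ‖y‖ ^ 2 := norm_exp_sub_one_sub_le y hy
  rw [hid]
  have h1 : ‖x*y + x*Ry + Rx + Rx*y + Rx*Ry + Ry‖
      ≤ ‖x‖*‖y‖ + ‖x‖*‖Ry‖ + ‖Rx‖ + ‖Rx‖*‖y‖ + ‖Rx‖*‖Ry‖ + ‖Ry‖ := by
    calc ‖x*y + x*Ry + Rx + Rx*y + Rx*Ry + Ry‖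
        ≤ ‖x*y + x*Ry + Rx + Rx*y + Rx*Ry‖ + ‖Ry‖ := norm_add_le _ _
      _ ≤ ‖x*y + x*Ry + Rx + Rx*y‖ + ‖Rx*Ry‖ + ‖Ry‖ := by
          gcongr; exact norm_add_le _ _
      _ ≤ ‖x*y + x*Ry + Rx‖ + ‖Rx*y‖ + ‖Rx*Ry‖ + ‖Ry‖ := by
          gcongr; exact norm_add_le _ _
      _ ≤ ‖x*y + x*Ry‖ + ‖Rx‖ + ‖Rx*y‖ + ‖Rx*Ry‖ + ‖Ry‖ := by
          gcongr; exact norm_add_le _ _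
      _ ≤ ‖x*y‖ + ‖x*Ry‖ + ‖Rx‖ + ‖Rx*y‖ + ‖Rx*Ry‖ + ‖Ry‖ := by
          gcongr; exact norm_add_le _ _
      _ ≤ ‖x‖*‖y‖ + ‖x‖*‖Ry‖ + ‖Rx‖ + ‖Rx‖*‖y‖ + ‖Rx‖*‖Ry‖ + ‖Ry‖ := by
          gcongr <;> exact norm_mul_le _ _
  refine h1.trans ?_
  have h0x := norm_nonneg x
  have h0y := norm_nonneg y
  have h0Rx := norm_nonneg Rx
  have h0Ry := norm_nonneg Ry
  have t1 : ‖x‖*‖y‖ ≤ (‖x‖+‖y‖)^2 := by nlinarith [mul_nonneg h0x h0y]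
  have t2 : ‖x‖*‖Ry‖ ≤ (‖x‖+‖y‖)^2 := by
    nlinarith [mul_le_mul_of_nonneg_left hRy h0x, mul_nonneg h0x h0y,
      mul_le_mul_of_nonneg_right hx (mul_nonneg h0y h0y)]
  have t3 : ‖Rx‖ ≤ (‖x‖+‖y‖)^2 := by nlinarith [mul_nonneg h0x h0y]
  have t4 : ‖Rx‖*‖y‖ ≤ (‖x‖+‖y‖)^2 := by
    nlinarith [mul_le_mul_of_nonneg_right hRx h0y, mul_nonneg h0x h0y,
      mul_le_mul_of_nonneg_left hy (mul_nonneg h0x h0x)]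
  have t5 : ‖Rx‖*‖Ry‖ ≤ (‖x‖+‖y‖)^2 := by
    have e1 : ‖Rx‖*‖Ry‖ ≤ (‖x‖^2)*(‖y‖^2) := mul_le_mul hRx hRy h0Ry (by positivity)
    have e2 : (‖x‖^2)*(‖y‖^2) ≤ ‖x‖^2 := by
      nlinarith [sq_nonneg ‖x‖, mul_le_mul_of_nonneg_left (mul_le_one₀ hy h0y hy) (sq_nonneg ‖x‖)]
    nlinarith [mul_nonneg h0x h0y]
  have t6 : ‖Ry‖ ≤ (‖x‖+‖y‖)^2 := by nlinarith [mul_nonneg h0x h0y]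
  linarith

/-- Let the compact group `G` act on a real unital Banach algebra `A`
by isometric unital algebra automorphisms, and let `M ≥ 1`. There is a constant `C > 0`,
depending only on `M`, such that: whenever `ρ : G → Aˣ` satisfies `‖ρ s‖ ≤ M` and
`‖(ρ s)⁻¹‖ ≤ M`, `0 < ε ≤ 1`, and `β : G × G → A` satisfies `‖β s t‖ ≤ ε` and
`exp (β s t) = ρ s * (s • ρ t) * (ρ (s*t))⁻¹`, then, with
`s ▷ x := ρ s * (s • x) * (ρ s)⁻¹`, one has
`‖s ▷ β t u - β (st) u + β s (tu) - β s t‖ ≤ C ε²` for all `s, t, u`. -/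
theorem defect_is_almost_two_cocycle {G : Type*} [Group G] [TopologicalSpace G]
    [IsTopologicalGroup G] [CompactSpace G]
    {A : Type*} [NormedRing A] [NormOneClass A] [CompleteSpace A] [NormedAlgebra ℝ A]
    (σ : G →* (A ≃ₐ[ℝ] A)) (hiso : ∀ s : G, Isometry (σ s))
    (M : ℝ) (hM : 1 ≤ M) :
    ∃ C : ℝ, 0 < C ∧
      ∀ ρ : G → Aˣ,
        (∀ s : G, ‖(ρ s : A)‖ ≤ M) → (∀ s : G, ‖(((ρ s)⁻¹ : Aˣ) : A)‖ ≤ M) →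
        ∀ ε : ℝ, 0 < ε → ε ≤ 1 →
        ∀ β : G → G → A,
          (∀ s t : G, ‖β s t‖ ≤ ε) →
          (∀ s t : G,
            exp (β s t) = (ρ s : A) * σ s (ρ t : A) * ((ρ (s * t))⁻¹ : Aˣ)) →
          ∀ s t u : G,
            ‖(ρ s : A) * σ s (β t u) * (((ρ s)⁻¹ : Aˣ) : A)
              - β (s * t) u + β s (t * u) - β s t‖ ≤ C * ε ^ 2 := by
  refine ⟨12*(M^2+1)^2 + (M^2+3)*M^2, by nlinarith, ?_⟩
  intro ρ hρ hρinv ε hε hε1 β hβ hexp s t u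
  have hσc : ∀ g : G, Continuous (σ g) := fun g => (hiso g).continuous
  have hσn : ∀ (g : G) (x : A), ‖σ g x‖ = ‖x‖ := fun g x =>
    (hiso g).norm_map_of_map_zero (map_zero _) x
  set a : A := (ρ s : A) * σ s (β t u) * (((ρ s)⁻¹ : Aˣ) : A) with hadef
  set b : A := β s (t * u) with hbdef
  set c : A := β s t with hcdef
  set d : A := β (s * t) u with hddef
  have ha : ‖a‖ ≤ M^2 * ε := by
    have h1 : ‖a‖ ≤ ‖(ρ s : A) * σ s (β t u)‖ * ‖(((ρ s)⁻¹ : Aˣ) : A)‖ := norm_mul_le _ _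
    have h2 : ‖(ρ s : A) * σ s (β t u)‖ ≤ M * ε := by
      calc ‖(ρ s : A) * σ s (β t u)‖ ≤ ‖(ρ s : A)‖ * ‖σ s (β t u)‖ := norm_mul_le _ _
        _ ≤ M * ε := by
            rw [hσn]
            exact mul_le_mul (hρ s) (hβ t u) (norm_nonneg _) (by linarith)
    calc ‖a‖ ≤ ‖(ρ s : A) * σ s (β t u)‖ * ‖(((ρ s)⁻¹ : Aˣ) : A)‖ := h1
      _ ≤ (M * ε) * M := by
          apply mul_le_mul h2 (hρinv s) (norm_nonneg _) (by positivity)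
      _ = M^2 * ε := by ring
  have hb : ‖b‖ ≤ ε := hβ s (t*u)
  have hc : ‖c‖ ≤ ε := hβ s t
  have hd : ‖d‖ ≤ ε := hβ (s*t) u
  -- composition law
  have comp : ∀ (g h : G) (x : A), σ g (σ h x) = σ (g*h) x := by
    intro g h x
    rw [map_mul σ, AlgEquiv.mul_apply]
  -- cancellation inside σ
  have hcan : ∀ (g h : G) (z : A),
      σ g ((((ρ h)⁻¹ : Aˣ) : A)) * (σ g ((ρ h : A)) * z) = z := by
    intro g h z
    rw [← mul_assoc, ← map_mul, Units.inv_mul, map_one, one_mul]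
  -- the key multiplicative identity
  have e1 : exp a = (ρ s : A) * σ s (exp (β t u)) * (((ρ s)⁻¹ : Aˣ) : A) := by
    letI : NormedAlgebra ℚ A := NormedAlgebra.restrictScalars ℚ ℝ A
    rw [hadef, exp_units_conj, ← map_exp (σ s) (hσc s)]
  have hkey : exp a * exp b = exp c * exp d := by
    rw [e1, hexp t u, hbdef, hcdef, hddef, hexp s (t*u), hexp s t, hexp (s*t) u]
    simp only [map_mul, comp, mul_assoc, Units.inv_mul_cancel_left, hcan]
  have hdiff : a - d + b - c
      = (exp c * exp d - 1 - c - d) - (exp a * exp b - 1 - a - b) := by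
    rw [← hkey]; abel
  by_cases hcase : M^2 * ε ≤ 1
  · have ha1 : ‖a‖ ≤ 1 := ha.trans hcase
    have hb1 : ‖b‖ ≤ 1 := hb.trans hε1
    have hc1 : ‖c‖ ≤ 1 := hc.trans hε1
    have hd1 : ‖d‖ ≤ 1 := hd.trans hε1
    have hE1 : ‖exp a * exp b - 1 - a - b‖ ≤ 6 * (‖a‖ + ‖b‖)^2 :=
      exp_mul_exp_sub_bound a b ha1 hb1
    have hE2 : ‖exp c * exp d - 1 - c - d‖ ≤ 6 * (‖c‖ + ‖d‖)^2 :=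
      exp_mul_exp_sub_bound c d hc1 hd1
    have h1 : ‖a - d + b - c‖
        ≤ ‖exp c * exp d - 1 - c - d‖ + ‖exp a * exp b - 1 - a - b‖ := by
      rw [hdiff]; exact norm_sub_le _ _
    have hab : ‖a‖ + ‖b‖ ≤ (M^2 + 1) * ε := by linarith
    have hcd : ‖c‖ + ‖d‖ ≤ 2 * ε := by linarith
    have habn : (0:ℝ) ≤ ‖a‖ + ‖b‖ := by positivity
    have hcdn : (0:ℝ) ≤ ‖c‖ + ‖d‖ := by positivity
    have h2 : (‖a‖ + ‖b‖)^2 ≤ ((M^2+1)*ε)^2 := by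
      apply pow_le_pow_left₀ habn hab
    have h3 : (‖c‖ + ‖d‖)^2 ≤ (2*ε)^2 := by
      apply pow_le_pow_left₀ hcdn hcd
    have hM2 : (2*ε)^2 ≤ ((M^2+1)*ε)^2 := by
      apply pow_le_pow_left₀ (by positivity)
      nlinarith [mul_nonneg (by nlinarith : (0:ℝ) ≤ M^2 - 1) hε.le]
    have key : ‖a - d + b - c‖ ≤ 12 * ((M^2+1)*ε)^2 := by linarith [h1, hE1, hE2, h2, h3, hM2]
    have hpos : (0:ℝ) ≤ (M^2+3)*M^2*ε^2 := by positivity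
    have hexpand : 12 * ((M^2+1)*ε)^2 = 12*(M^2+1)^2 * ε^2 := by ring
    linarith
  · push_neg at hcase
    have h1 : ‖a - d + b - c‖ ≤ ‖a‖ + ‖d‖ + ‖b‖ + ‖c‖ := by
      calc ‖a - d + b - c‖ ≤ ‖a - d + b‖ + ‖c‖ := norm_sub_le _ _
        _ ≤ ‖a - d‖ + ‖b‖ + ‖c‖ := by gcongr; exact norm_add_le _ _
        _ ≤ ‖a‖ + ‖d‖ + ‖b‖ + ‖c‖ := by gcongr; exact norm_sub_le _ _
    have h2 : ε < M^2 * ε^2 := by nlinarith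
    nlinarith [sq_nonneg M, sq_nonneg ε]
end

section
/- Let G be a compact topological group with Haar probability measure μ, and let V be a real Banach space on which G acts continuously by linear isometries. Let β : G × G → V be continuous with sup_{s,t,u} ‖s • β(t,u) − β(st,u) + β(s,tu) − β(s,t)‖ ≤ ε for some ε ≥ 0 (β is an almost-2-cocycle). Then there exist a continuous map α : G → V such that the coboundary δα(s,t) := s • α(t) − α(st) + α(s) satisfies sup_{s,t} ‖β(s,t) − (−δα)(s,t)‖ ≤ ε; in particular every continuous almost-2-cocycle is uniformly close (within its cocycle defect) to an actual continuous 2-coboundary, hence to a 2-cocycle. -/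
open MeasureTheory
open scoped BoundedContinuousFunction

/-- Let `G` be a compact group with Haar probability measure `μ`,
acting continuously by linear isometries on a real Banach space `V`. If `β : G × G → V`
is a continuous almost-2-cocycle with defect at most `ε`, i.e.
`‖s • β(t,u) - β(st,u) + β(s,tu) - β(s,t)‖ ≤ ε` for all `s, t, u`, then there is a
continuous `α : G → V` such that `β` is uniformly within `ε` of the 2-coboundary `-δα`,
where `δα(s,t) = s • α(t) - α(st) + α(s)`. -/
theorem almost_two_cocycle_near_coboundary {G : Type*} [Group G] [TopologicalSpace G]
    [IsTopologicalGroup G] [CompactSpace G] [MeasurableSpace G] [BorelSpace G]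
    (μ : Measure G) [μ.IsHaarMeasure] [IsProbabilityMeasure μ]
    {V : Type*} [NormedAddCommGroup V] [NormedSpace ℝ V] [CompleteSpace V]
    (σ : G →* (V ≃ₗᵢ[ℝ] V)) (hσ : Continuous fun p : G × V => σ p.1 p.2)
    (β : G → G → V) (hβ : Continuous fun p : G × G => β p.1 p.2)
    (ε : ℝ) (hε : 0 ≤ ε)
    (hdef : ∀ s t u : G,
      ‖σ s (β t u) - β (s * t) u + β s (t * u) - β s t‖ ≤ ε) :
    ∃ α : G → V, Continuous α ∧
      ∀ s t : G, ‖β s t - (-(σ s (α t) - α (s * t) + α s))‖ ≤ ε := by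
  classical
  -- integrability of continuous functions on G
  have hint : ∀ f : G → V, Continuous f → Integrable f μ := fun f hf =>
    hf.integrable_of_hasCompactSupport (isClosed_tsupport _).isCompact
  set I : G → V := fun s => ∫ u, β s u ∂μ with hI
  have hβs : ∀ s : G, Continuous fun u => β s u := fun s =>
    hβ.comp (Continuous.prodMk_right s)
  -- continuity of I via the bounded-continuous-function isometry
  have hlip : LipschitzWith 1 (fun f : G →ᵇ V => ∫ u, f u ∂μ) := by
    refine LipschitzWith.of_dist_le_mul fun f g => ?_
    rw [NNReal.coe_one, one_mul, dist_eq_norm, dist_eq_norm]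
    calc ‖(∫ u, f u ∂μ) - ∫ u, g u ∂μ‖
        = ‖∫ u, (f - g) u ∂μ‖ := by
          rw [← integral_sub (hint _ f.continuous) (hint _ g.continuous)]
          simp
      _ ≤ ‖f - g‖ * (μ Set.univ).toReal :=
          norm_integral_le_of_norm_le_const
            (Filter.Eventually.of_forall fun u => (f - g).norm_coe_le_norm u)
      _ = ‖f - g‖ := by simp
  have hIcont : Continuous I := by
    have hc : Continuous fun s : G =>
        BoundedContinuousFunction.mkOfCompact ((ContinuousMap.curry ⟨_, hβ⟩) s) := by
      exact (ContinuousMap.isometryEquivBoundedOfCompact G V).continuous.comp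
        (ContinuousMap.curry (⟨_, hβ⟩ : C(G × G, V))).continuous
    have := hlip.continuous.comp hc
    exact this
  set α : G → V := fun s => -I s with hα
  refine ⟨α, hIcont.neg, fun s t => ?_⟩
  -- the continuous linear map given by σ s
  set L : V →L[ℝ] V := (σ s).toLinearIsometry.toContinuousLinearMap with hL
  have h1 : Integrable (fun u => σ s (β t u)) μ :=
    hint _ (hσ.comp ((continuous_const.prodMk (hβs t)) :
      Continuous fun u : G => ((s : G), β t u)))
  have h2 : Integrable (fun u => β (s * t) u) μ := hint _ (hβs (s * t))
  have h12 : Integrable (fun u => σ s (β t u) - β (s * t) u) μ := h1.sub h2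
  have h3 : Integrable (fun u => β s (t * u)) μ :=
    hint _ ((hβs s).comp (continuous_const.mul continuous_id))
  have h123 : Integrable (fun u => σ s (β t u) - β (s * t) u + β s (t * u)) μ := h12.add h3
  have h4 : Integrable (fun _ : G => β s t) μ := integrable_const _
  have key : ‖∫ u, (σ s (β t u) - β (s * t) u + β s (t * u) - β s t) ∂μ‖ ≤ ε := by
    calc ‖∫ u, (σ s (β t u) - β (s * t) u + β s (t * u) - β s t) ∂μ‖
        ≤ ε * (μ Set.univ).toReal :=
          norm_integral_le_of_norm_le_const (Filter.Eventually.of_forall fun u => hdef s t u)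
      _ = ε := by simp
  have hcomm : (∫ u, σ s (β t u) ∂μ) = σ s (I t) := by
    have := L.integral_comp_comm (hint _ (hβs t))
    simpa [hL, hI] using this
  have hinv : (∫ u, β s (t * u) ∂μ) = I s :=
    integral_mul_left_eq_self (fun u => β s u) t
  have hsplit : (∫ u, (σ s (β t u) - β (s * t) u + β s (t * u) - β s t) ∂μ)
      = σ s (I t) - I (s * t) + I s - β s t := by
    rw [integral_sub h123 h4, integral_add h12 h3, integral_sub h1 h2,
      hcomm, hinv, integral_const]
    simp
    rfl
  rw [hsplit] at key
  have heq : β s t - (-(σ s (α t) - α (s * t) + α s))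
      = -(σ s (I t) - I (s * t) + I s - β s t) := by
    simp only [hα, map_neg]
    abel
  rw [heq, norm_neg]
  exact key
end
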